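/- arXiv:2110.10904 — 3 statements merged into one kernel-verified Lean document; each statement's English description precedes it below -/
import Mathlib

section
/- Let g₁, g₂ be hyperbolic isometries of a simplicial tree whose axes γ₁, γ₂ intersect with opposite orientations along a path of length Δ with Δ < min{l(g₁), l(g₂)}. Then g₁g₂ is hyperbolic and l(g₁g₂) = l(g₁) + l(g₂) − 2Δ. -/
open SimpleGraph

variable {V : Type*}

section Infra

variable {G : SimpleGraph V}

/-- Graph automorphisms preserve distance. -/
lemma iso_dist (hC : G.Connected) (g : G ≃g G) (a b : V) :
    G.dist (g a) (g b) = G.dist a b := by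
  have h1 : ∀ (g : G ≃g G) (a b : V), G.dist (g a) (g b) ≤ G.dist a b := by
    intro g a b
    obtain ⟨w, hw⟩ := hC.exists_walk_length_eq_dist a b
    have := SimpleGraph.dist_le (w.map g.toHom)
    rwa [SimpleGraph.Walk.length_map, hw] at this
  refine le_antisymm (h1 g a b) ?_
  have := h1 g.symm (g a) (g b)
  simpa using this

/-- In a tree, any path realizes the distance. -/
lemma tree_path_length (hT : G.IsTree) {a b : V} (w : G.Walk a b) (hw : w.IsPath) :
    w.length = G.dist a b := by
  obtain ⟨w₀, hw₀p, hw₀⟩ := hT.isConnected.exists_path_of_dist a b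
  have := (hT.existsUnique_path a b).unique hw hw₀p
  rw [this, hw₀]

/-- A vertex on a shortest walk splits the distance. -/
lemma mem_support_split (hC : G.Connected) {a b v : V} {w : G.Walk a b}
    (hw : w.length = G.dist a b) (hv : v ∈ w.support) :
    G.dist a v + G.dist v b = G.dist a b := by
  classical
  have hspec := w.take_spec hv
  have hlen : (w.takeUntil v hv).length + (w.dropUntil v hv).length = w.length := by
    rw [← SimpleGraph.Walk.length_append, hspec]
  have h1 := SimpleGraph.dist_le (w.takeUntil v hv)
  have h2 := SimpleGraph.dist_le (w.dropUntil v hv)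
  have h3 := hC.dist_triangle (u := a) (v := v) (w := b)
  omega

/-- Trees are "bipartite": neighbours have different distances to any vertex. -/
lemma adj_dist_ne (hT : G.IsTree) {x y : V} (h : G.Adj x y) (z : V) :
    G.dist z x ≠ G.dist z y := by
  intro heq
  obtain ⟨P, hPp, hPl⟩ := hT.isConnected.exists_path_of_dist z x
  by_cases hy : y ∈ P.support
  · have := mem_support_split hT.isConnected hPl hy
    have hpos : 0 < G.dist y x :=
      hT.isConnected.pos_dist_of_ne (fun he => (G.ne_of_adj h) he.symm)
    omega
  · have hQ : (SimpleGraph.Walk.cons h.symm P.reverse).IsPath := by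
      refine hPp.reverse.cons ?_
      rwa [SimpleGraph.Walk.support_reverse, List.mem_reverse]
    have := tree_path_length hT _ hQ.reverse
    rw [SimpleGraph.Walk.length_reverse, SimpleGraph.Walk.length_cons,
      SimpleGraph.Walk.length_reverse] at this
    have c1 : G.dist x z = G.dist z x := SimpleGraph.dist_comm
    have c2 : G.dist y z = G.dist z y := SimpleGraph.dist_comm
    omega

/-- In a tree the neighbour strictly closer to a target is unique. -/
lemma unique_dec (hT : G.IsTree) {x z u₁ u₂ : V}
    (h1 : G.Adj x u₁) (h2 : G.Adj x u₂)
    (hd1 : G.dist u₁ z + 1 = G.dist x z) (hd2 : G.dist u₂ z + 1 = G.dist x z) :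
    u₁ = u₂ := by
  have key : ∀ {u : V}, G.Adj x u → G.dist u z + 1 = G.dist x z →
      ∃ (w : G.Walk x z), w.IsPath ∧ w.getVert 1 = u := by
    intro u hu hd
    obtain ⟨P, hPp, hPl⟩ := hT.isConnected.exists_path_of_dist u z
    have hx : x ∉ P.support := by
      intro hx
      have := mem_support_split hT.isConnected hPl hx
      omega
    refine ⟨SimpleGraph.Walk.cons hu P, hPp.cons hx, ?_⟩
    rw [SimpleGraph.Walk.getVert_cons _ _ one_ne_zero]
    exact SimpleGraph.Walk.getVert_zero P
  obtain ⟨w₁, hw₁, hg₁⟩ := key h1 hd1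
  obtain ⟨w₂, hw₂, hg₂⟩ := key h2 hd2
  have := (hT.existsUnique_path x z).unique hw₁ hw₂
  rw [← hg₁, ← hg₂, this]

/-- Existence of a neighbour strictly closer to a target. -/
lemma exists_dec (hC : G.Connected) {x y : V} (h : G.dist x y ≠ 0) :
    ∃ v, G.Adj x v ∧ G.dist v y + 1 = G.dist x y := by
  obtain ⟨w, hw⟩ := hC.exists_walk_length_eq_dist x y
  cases w with
  | nil => simp [SimpleGraph.dist_self] at h
  | @cons _ v _ ha w' =>
    refine ⟨v, ha, ?_⟩
    rw [SimpleGraph.Walk.length_cons] at hw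
    have h1 : G.dist v y ≤ w'.length := SimpleGraph.dist_le w'
    have h2 := hC.dist_triangle (u := x) (v := v) (w := y)
    have h3 : G.dist x v = 1 := SimpleGraph.dist_eq_one_iff_adj.mpr ha
    omega

lemma adj_dist_diff (hC : G.Connected) {x v : V} (h : G.Adj x v) (y : V) :
    G.dist v y ≤ G.dist x y + 1 ∧ G.dist x y ≤ G.dist v y + 1 := by
  have h3 : G.dist x v = 1 := SimpleGraph.dist_eq_one_iff_adj.mpr h
  have t1 := hC.dist_triangle (u := v) (v := x) (w := y)
  have t2 := hC.dist_triangle (u := x) (v := v) (w := y)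
  have c1 : G.dist v x = G.dist x v := SimpleGraph.dist_comm
  omega

end Infra

section Geo

variable {G : SimpleGraph V}

/-- If the geodesic from `x` to `y` starts at `x'` but no geodesic to `z` does,
then `x` lies between `y` and `z`. -/
lemma straight (hT : G.IsTree) :
    ∀ (k : ℕ) (x x' y z : V), G.dist x z = k → G.Adj x x' →
      G.dist x' y + 1 = G.dist x y → G.dist x' z + 1 ≠ G.dist x z →
      G.dist y z = G.dist x y + G.dist x z := by
  intro k
  induction k with
  | zero =>
    intro x x' y z hk _ _ _
    have hxz : x = z := (hT.isConnected.dist_eq_zero_iff).mp hk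
    subst hxz
    have : G.dist y x = G.dist x y := SimpleGraph.dist_comm
    omega
  | succ n ih =>
    intro x x' y z hk hadj hdec hne
    obtain ⟨x₁, hadj₁, hdec₁⟩ := exists_dec hT.isConnected (x := x) (y := z) (by omega)
    have hne₁ : x₁ ≠ x' := by
      intro he; rw [he] at hdec₁; exact hne hdec₁
    have hby : G.dist y x ≠ G.dist y x₁ := adj_dist_ne hT hadj₁ y
    have hnotdec : G.dist x₁ y + 1 ≠ G.dist x y := by
      intro he
      exact hne₁ (unique_dec hT hadj₁ hadj he hdec)
    have hdiff := adj_dist_diff hT.isConnected hadj₁ y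
    have cyx : G.dist y x = G.dist x y := SimpleGraph.dist_comm
    have cyx₁ : G.dist y x₁ = G.dist x₁ y := SimpleGraph.dist_comm
    have hinc : G.dist x₁ y = G.dist x y + 1 := by omega
    have := ih x₁ x y z (by omega) hadj₁.symm (by omega) (by omega)
    omega

/-- Median (tripod) points exist in a tree. -/
lemma median (hT : G.IsTree) :
    ∀ (k : ℕ) (x y z : V), G.dist x y = k →
      ∃ m, G.dist x m + G.dist m y = G.dist x y ∧
        G.dist x m + G.dist m z = G.dist x z ∧
        G.dist y m + G.dist m z = G.dist y z := by
  intro k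
  induction k with
  | zero =>
    intro x y z hk
    have hxy : x = y := (hT.isConnected.dist_eq_zero_iff).mp hk
    subst hxy
    refine ⟨x, ?_, ?_, ?_⟩ <;> simp [SimpleGraph.dist_self]
  | succ n ih =>
    intro x y z hk
    obtain ⟨x', hadj, hdec⟩ := exists_dec hT.isConnected (x := x) (y := y) (by omega)
    by_cases hc : G.dist x' z + 1 = G.dist x z
    · obtain ⟨m, e1, e2, e3⟩ := ih x' y z (by omega)
      have hxx' : G.dist x x' = 1 := SimpleGraph.dist_eq_one_iff_adj.mpr hadj
      have t1 := hT.isConnected.dist_triangle (u := x) (v := m) (w := z)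
      have t2 := hT.isConnected.dist_triangle (u := x) (v := x') (w := m)
      have t3 := hT.isConnected.dist_triangle (u := x) (v := x') (w := y)
      have t4 := hT.isConnected.dist_triangle (u := x) (v := m) (w := y)
      have hxm : G.dist x m = G.dist x' m + 1 := by omega
      exact ⟨m, by omega, by omega, by omega⟩
    · have := straight hT (G.dist x z) x x' y z rfl hadj hdec hc
      have cyx : G.dist y x = G.dist x y := SimpleGraph.dist_comm
      refine ⟨x, ?_, ?_, ?_⟩
      · simp [SimpleGraph.dist_self]
      · simp [SimpleGraph.dist_self]
      · omega

/-- Collinearity extension: if `b ∈ [a,c]`, `c ∈ [b,d]`, `b ≠ c`, the four points are aligned. -/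
lemma collin (hT : G.IsTree) {a b c d : V}
    (h1 : G.dist a b + G.dist b c = G.dist a c)
    (h2 : G.dist b c + G.dist c d = G.dist b d)
    (hbc : G.dist b c ≠ 0) :
    G.dist a d = G.dist a b + G.dist b c + G.dist c d := by
  obtain ⟨m, e1, e2, e3⟩ := median hT (G.dist b a) b a d rfl
  rcases Nat.eq_zero_or_pos (G.dist b m) with hs | hs
  · have hmb : b = m := (hT.isConnected.dist_eq_zero_iff).mp hs
    subst hmb
    have cab : G.dist a b = G.dist b a := SimpleGraph.dist_comm
    omega
  · exfalso
    obtain ⟨v, hvadj, hvdec⟩ := exists_dec hT.isConnected (x := b) (y := m) (by omega)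
    have hbv : G.dist b v = 1 := SimpleGraph.dist_eq_one_iff_adj.mpr hvadj
    -- v ∈ [b,a] and v ∈ [b,d]
    have t1 := hT.isConnected.dist_triangle (u := v) (v := m) (w := a)
    have t2 := hT.isConnected.dist_triangle (u := b) (v := v) (w := a)
    have t3 := hT.isConnected.dist_triangle (u := v) (v := m) (w := d)
    have t4 := hT.isConnected.dist_triangle (u := b) (v := v) (w := d)
    have hva : G.dist b v + G.dist v a = G.dist b a := by omega
    have hvd : G.dist b v + G.dist v d = G.dist b d := by omega
    -- u : decreasing neighbour from b towards c; lies on [b,d] too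
    obtain ⟨u, huadj, hudec⟩ := exists_dec hT.isConnected (x := b) (y := c) (by omega)
    have hbu : G.dist b u = 1 := SimpleGraph.dist_eq_one_iff_adj.mpr huadj
    have t5 := hT.isConnected.dist_triangle (u := u) (v := c) (w := d)
    have t6 := hT.isConnected.dist_triangle (u := b) (v := u) (w := d)
    have hud : G.dist u d + 1 = G.dist b d := by omega
    have hvd' : G.dist v d + 1 = G.dist b d := by omega
    have huv : u = v := unique_dec hT huadj hvadj hud hvd'
    subst huv
    -- now u ∈ [b,c] and b ∈ [a,c] give d(a,u) = d(a,b) + 1, but u ∈ [b,a] gives d(a,u) = d(a,b) - 1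
    have t7 := hT.isConnected.dist_triangle (u := a) (v := u) (w := c)
    have t8 := hT.isConnected.dist_triangle (u := a) (v := b) (w := u)
    have cau : G.dist a u = G.dist u a := SimpleGraph.dist_comm
    have cab : G.dist a b = G.dist b a := SimpleGraph.dist_comm
    omega

end Geo



/-- Translation length of a graph automorphism of `G` (min displacement over vertices). -/
noncomputable def ell (G : SimpleGraph V) (g : G ≃g G) : ℕ :=
  sInf (Set.range fun x => G.dist x (g x))

/-- The set of vertices realizing the minimal displacement (the axis, for hyperbolic `g`). -/
def axisSet (G : SimpleGraph V) (g : G ≃g G) : Set V :=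
  {x | G.dist x (g x) = ell G g}

/-- `g` acts without inversions: no edge is flipped. -/
def noInv (G : SimpleGraph V) (g : G ≃g G) : Prop :=
  ∀ x y, G.Adj x y → ¬(g x = y ∧ g y = x)

/-- The segment (geodesic) between `p` and `q` in the tree. -/
def seg (G : SimpleGraph V) (p q : V) : Set V :=
  {x | G.dist p x + G.dist x q = G.dist p q}

/-- The open segment between `p` and `q` (endpoints removed). -/
def openSeg (G : SimpleGraph V) (p q : V) : Set V :=
  {x | x ∈ seg G p q ∧ x ≠ p ∧ x ≠ q}

/-- Distance from a vertex to a set of vertices. -/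
noncomputable def distToSet (G : SimpleGraph V) (x : V) (S : Set V) : ℕ :=
  sInf (G.dist x '' S)

/-- Distance between two sets of vertices. -/
noncomputable def setDist (G : SimpleGraph V) (S T : Set V) : ℕ :=
  sInf (Set.image2 G.dist S T)

/-- The projection of `B` onto `A`: points of `A` at minimal distance from `B`. -/
noncomputable def projOn (G : SimpleGraph V) (A B : Set V) : Set V :=
  {x | x ∈ A ∧ distToSet G x B = setDist G A B}

/-- `g` translates the vertex `p` (assumed on its axis) towards the vertex `q`. -/
noncomputable def translatesToward (G : SimpleGraph V) (g : G ≃g G) (p q : V) : Prop :=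
  (G.dist (g p) q : ℤ) = |(G.dist p q : ℤ) - (ell G g : ℤ)|


section Claims

variable {G : SimpleGraph V}

/-- Minimal-displacement points along `[w, g w]` also have minimal displacement. -/
lemma axisseg (hC : G.Connected) (g : G ≃g G) (l : ℕ) (hl : ∀ x, l ≤ G.dist x (g x))
    {w z : V} (hw : G.dist w (g w) = l)
    (hz : G.dist w z + G.dist z (g w) = G.dist w (g w)) : G.dist z (g z) = l := by
  have h1 := hl z
  have t0 := hC.dist_triangle (u := z) (v := g w) (w := g z)
  have a0 : G.dist (g w) (g z) = G.dist w z := iso_dist hC g w z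
  omega

/-- Key geometric alignment: `g₁ p` lies on the geodesic from `q` to `g₁ g₂ q`. -/
lemma claimA (hT : G.IsTree) (g₁ g₂ : G ≃g G) (l1 l2 Δ : ℕ) (p q : V)
    (hl1 : ∀ x, l1 ≤ G.dist x (g₁ x)) (hl2 : ∀ x, l2 ≤ G.dist x (g₂ x))
    (hp1 : G.dist p (g₁ p) = l1) (hq2 : G.dist q (g₂ q) = l2)
    (hd1q : G.dist (g₁ p) q + Δ = l1) (hd2p : G.dist (g₂ q) p + Δ = l2)
    (hpq : G.dist p q = Δ) (hΔ1 : Δ < l1) (hΔ2 : Δ < l2)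
    (hax : ∀ x, G.dist x (g₁ x) = l1 → G.dist x (g₂ x) = l2 →
      G.dist p x + G.dist x q = Δ) :
    G.dist q (g₁ p) + G.dist (g₁ p) (g₁ (g₂ q)) = G.dist q (g₁ (g₂ q)) := by
  have hC := hT.isConnected
  have dcomm : ∀ a b : V, G.dist a b = G.dist b a := fun _ _ => SimpleGraph.dist_comm
  have tri : ∀ a b c : V, G.dist a c ≤ G.dist a b + G.dist b c :=
    fun a b c => hC.dist_triangle
  have aut : ∀ (g : G ≃g G) (a b : V), G.dist (g a) (g b) = G.dist a b := iso_dist hC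
  have c2 : G.dist q p + G.dist p (g₂ q) = G.dist q (g₂ q) := by
    have := dcomm p q; have := dcomm (g₂ q) p; omega
  have c3 : G.dist p q + G.dist q (g₁ p) = G.dist p (g₁ p) := by
    have := dcomm (g₁ p) q; omega
  have hgpb : G.dist (g₁ p) (g₁ (g₂ q)) = G.dist p (g₂ q) := aut g₁ p (g₂ q)
  obtain ⟨m, em1, em2, em3⟩ :=
    median hT (G.dist (g₁ p) q) (g₁ p) q (g₁ (g₂ q)) rfl
  have ht0 : G.dist (g₁ p) m = 0 := by
    by_contra ht
    obtain ⟨v, hvadj, hvdec⟩ := exists_dec hC ht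
    have hv1 : G.dist (g₁ p) v = 1 := SimpleGraph.dist_eq_one_iff_adj.mpr hvadj
    have tv1 := tri (g₁ p) v q
    have tv2 := tri v m q
    have hv2 : G.dist (g₁ p) v + G.dist v q = G.dist (g₁ p) q := by omega
    have tv3 := tri (g₁ p) v (g₁ (g₂ q))
    have tv4 := tri v m (g₁ (g₂ q))
    have hv3 : G.dist (g₁ p) v + G.dist v (g₁ (g₂ q)) = G.dist (g₁ p) (g₁ (g₂ q)) := by
      omega
    have tv5 := tri p v (g₁ p)
    have tv6 := tri p q v
    have dvq := dcomm v q
    have dvgp := dcomm v (g₁ p)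
    have hv4 : G.dist p v + G.dist v (g₁ p) = G.dist p (g₁ p) := by omega
    have hvax1 : G.dist v (g₁ v) = l1 := axisseg hC g₁ l1 hl1 hp1 hv4
    have hw1 : G.dist (g₁.symm v) (g₁ (g₁.symm v)) = l1 := by
      rw [g₁.apply_symm_apply]
      have h := aut g₁.symm v (g₁ v)
      rw [g₁.symm_apply_apply] at h
      rw [h, hvax1]
    have hw2 : G.dist p (g₁.symm v) = G.dist (g₁ p) v := by
      have h := aut g₁.symm (g₁ p) v
      rwa [g₁.symm_apply_apply] at h
    have hw3 : G.dist (g₁.symm v) (g₂ q) = G.dist v (g₁ (g₂ q)) := by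
      have h := aut g₁.symm v (g₁ (g₂ q))
      rwa [g₁.symm_apply_apply] at h
    have tw1 := tri q (g₁.symm v) (g₂ q)
    have tw2 := tri q p (g₁.symm v)
    have dqp := dcomm q p
    have hw5 : G.dist q (g₁.symm v) + G.dist (g₁.symm v) (g₂ q) = G.dist q (g₂ q) ∧
        G.dist q (g₁.symm v) = Δ + 1 := by omega
    have hvax2 : G.dist (g₁.symm v) (g₂ (g₁.symm v)) = l2 :=
      axisseg hC g₂ l2 hl2 hq2 hw5.1
    have hfin := hax (g₁.symm v) hw1 hvax2
    have := dcomm (g₁.symm v) q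
    omega
  have hm : g₁ p = m := (hC.dist_eq_zero_iff).mp ht0
  subst hm
  have := dcomm q (g₁ p)
  omega

/-- Second alignment: `q` lies on the geodesic from `(g₁g₂)⁻¹ q` to `g₁ g₂ q`. -/
lemma claimB (hT : G.IsTree) (g₁ g₂ : G ≃g G) (l1 l2 Δ : ℕ) (p q : V)
    (hl1 : ∀ x, l1 ≤ G.dist x (g₁ x)) (hl2 : ∀ x, l2 ≤ G.dist x (g₂ x))
    (hp1 : G.dist p (g₁ p) = l1) (hp2 : G.dist p (g₂ p) = l2)
    (hq2 : G.dist q (g₂ q) = l2)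
    (hd1q : G.dist (g₁ p) q + Δ = l1) (hd2p : G.dist (g₂ q) p + Δ = l2)
    (hpq : G.dist p q = Δ) (hΔ1 : Δ < l1) (hΔ2 : Δ < l2)
    (hax : ∀ x, G.dist x (g₁ x) = l1 → G.dist x (g₂ x) = l2 →
      G.dist p x + G.dist x q = Δ)
    (hA : G.dist q (g₁ p) + G.dist (g₁ p) (g₁ (g₂ q)) = G.dist q (g₁ (g₂ q))) :
    G.dist (g₂.symm (g₁.symm q)) q + G.dist q (g₁ (g₂ q)) =
      G.dist (g₂.symm (g₁.symm q)) (g₁ (g₂ q)) := by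
  have hC := hT.isConnected
  have dcomm : ∀ a b : V, G.dist a b = G.dist b a := fun _ _ => SimpleGraph.dist_comm
  have tri : ∀ a b c : V, G.dist a c ≤ G.dist a b + G.dist b c :=
    fun a b c => hC.dist_triangle
  have aut : ∀ (g : G ≃g G) (a b : V), G.dist (g a) (g b) = G.dist a b := iso_dist hC
  have hgpb : G.dist (g₁ p) (g₁ (g₂ q)) = G.dist p (g₂ q) := aut g₁ p (g₂ q)
  have hr2p : G.dist (g₂.symm p) p = l2 := by
    have h := aut g₂.symm p (g₂ p)
    rw [g₂.symm_apply_apply] at h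
    rw [h, hp2]
  have hg₂r₂ : g₂ (g₂.symm p) = p := g₂.apply_symm_apply p
  have hqr2 : G.dist q (g₂.symm p) + Δ = l2 := by
    have h := aut g₂ q (g₂.symm p)
    rw [hg₂r₂] at h
    omega
  have hqpr2 : G.dist p q + G.dist q (g₂.symm p) = G.dist p (g₂.symm p) := by
    have := dcomm (g₂.symm p) p; omega
  have hr2q' : G.dist (g₂.symm p) (g₂.symm (g₁.symm q)) = G.dist (g₁ p) q := by
    have h1 := aut g₂ (g₂.symm p) (g₂.symm (g₁.symm q))
    rw [hg₂r₂, g₂.apply_symm_apply] at h1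
    have h2 := aut g₁ p (g₁.symm q)
    rw [g₁.apply_symm_apply] at h2
    omega
  have he1 : G.dist (g₂.symm (g₁.symm q)) q = G.dist q (g₁ (g₂ q)) := by
    have h2 : G.dist (g₂ (g₂.symm (g₁.symm q))) (g₂ q) = G.dist (g₂.symm (g₁.symm q)) q :=
      aut g₂ _ q
    have h1 : G.dist (g₁ (g₁.symm q)) (g₁ (g₂ q)) = G.dist (g₁.symm q) (g₂ q) := aut g₁ _ _
    rw [g₁.apply_symm_apply] at h1
    rw [g₂.apply_symm_apply] at h2
    rw [← h2, h1]
  have hr2seg : G.dist q (g₂.symm p) + G.dist (g₂.symm p) (g₂.symm (g₁.symm q)) =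
      G.dist q (g₂.symm (g₁.symm q)) := by
    have := dcomm (g₂.symm (g₁.symm q)) q
    have := dcomm q (g₁ p)
    have := dcomm p (g₂ q)
    omega
  obtain ⟨n, en1, en2, en3⟩ :=
    median hT (G.dist q (g₂.symm (g₁.symm q))) q (g₂.symm (g₁.symm q)) (g₁ (g₂ q)) rfl
  have hn0 : G.dist q n = 0 := by
    by_contra hn
    obtain ⟨v, hvadj, hvdec⟩ := exists_dec hC hn
    have hv1 : G.dist q v = 1 := SimpleGraph.dist_eq_one_iff_adj.mpr hvadj
    have tv1 := tri q v (g₂.symm (g₁.symm q))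
    have tv2 := tri v n (g₂.symm (g₁.symm q))
    have hvq' : G.dist v (g₂.symm (g₁.symm q)) + 1 = G.dist q (g₂.symm (g₁.symm q)) := by
      omega
    have tv3 := tri q v (g₁ (g₂ q))
    have tv4 := tri v n (g₁ (g₂ q))
    have hvb : G.dist v (g₁ (g₂ q)) + 1 = G.dist q (g₁ (g₂ q)) := by omega
    have hqgp : G.dist q (g₁ p) ≠ 0 := by
      have := dcomm q (g₁ p); omega
    obtain ⟨u, huadj, hudec⟩ := exists_dec hC hqgp
    have hu1 : G.dist q u = 1 := SimpleGraph.dist_eq_one_iff_adj.mpr huadj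
    have tu1 := tri q u (g₁ (g₂ q))
    have tu2 := tri u (g₁ p) (g₁ (g₂ q))
    have hub : G.dist u (g₁ (g₂ q)) + 1 = G.dist q (g₁ (g₂ q)) := by omega
    have huv : u = v := unique_dec hT huadj hvadj hub hvb
    subst huv
    have tv5 := tri p u (g₁ p)
    have tv6 := tri p q u
    have du1 := dcomm u q
    have dq1 := dcomm q (g₁ p)
    have hv4 : G.dist p u + G.dist u (g₁ p) = G.dist p (g₁ p) ∧
        G.dist p u = Δ + 1 := by omega
    have hvax1 : G.dist u (g₁ u) = l1 := axisseg hC g₁ l1 hl1 hp1 hv4.1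
    have hqr2ne : G.dist q (g₂.symm p) ≠ 0 := by omega
    obtain ⟨u', hu'adj, hu'dec⟩ := exists_dec hC hqr2ne
    have hu'1 : G.dist q u' = 1 := SimpleGraph.dist_eq_one_iff_adj.mpr hu'adj
    have tu3 := tri q u' (g₂.symm (g₁.symm q))
    have tu4 := tri u' (g₂.symm p) (g₂.symm (g₁.symm q))
    have hu'q' : G.dist u' (g₂.symm (g₁.symm q)) + 1 = G.dist q (g₂.symm (g₁.symm q)) := by
      omega
    have hu'v : u' = u := unique_dec hT hu'adj hvadj hu'q' hvq'
    subst hu'v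
    have tv7 := tri p u' (g₂.symm p)
    have tv8 := tri (g₂.symm p) u' p
    have du2 := dcomm u' (g₂.symm p)
    have du3 := dcomm u' p
    have hv5 : G.dist (g₂.symm p) u' + G.dist u' p = G.dist (g₂.symm p) p := by omega
    have hvax2 : G.dist u' (g₂ u') = l2 := by
      refine axisseg hC g₂ l2 hl2 (w := g₂.symm p) ?_ ?_ <;> rw [hg₂r₂]
      · exact hr2p
      · exact hv5
    have hfin := hax u' hvax1 hvax2
    omega
  have hnq : q = n := (hC.dist_eq_zero_iff).mp hn0
  subst hnq
  have := dcomm (g₂.symm (g₁.symm q)) q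
  have := dcomm q (g₂.symm (g₁.symm q))
  omega

end Claims
section Final

variable {G : SimpleGraph V}

/-- If `q` is aligned with its forward and backward images under `g₁ g₂`, then its
displacement is minimal. -/
lemma prod_lower (hT : G.IsTree) (g₁ g₂ : G ≃g G) (q : V)
    (hne : G.dist q (g₁ (g₂ q)) ≠ 0)
    (hB : G.dist (g₂.symm (g₁.symm q)) q + G.dist q (g₁ (g₂ q)) =
      G.dist (g₂.symm (g₁.symm q)) (g₁ (g₂ q))) :
    ∀ y, G.dist q (g₁ (g₂ q)) ≤ G.dist y (g₁ (g₂ y)) := by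
  have hC := hT.isConnected
  have dcomm : ∀ a b : V, G.dist a b = G.dist b a := fun _ _ => SimpleGraph.dist_comm
  have tri : ∀ a b c : V, G.dist a c ≤ G.dist a b + G.dist b c :=
    fun a b c => hC.dist_triangle
  have aut : ∀ (g : G ≃g G) (a b : V), G.dist (g a) (g b) = G.dist a b := iso_dist hC
  set f : V → V := fun x => g₁ (g₂ x) with hf
  have hfa : ∀ x, f x = g₁ (g₂ x) := fun _ => rfl
  have hfd : ∀ a c : V, G.dist (f a) (f c) = G.dist a c := by
    intro a c
    rw [hfa, hfa, aut g₁, aut g₂]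
  have hstep : ∀ (n : ℕ) (a c : V), G.dist (f^[n] a) (f^[n] c) = G.dist a c := by
    intro n
    induction n with
    | zero => intro a c; simp
    | succ k ih =>
      intro a c
      rw [Function.iterate_succ_apply', Function.iterate_succ_apply', hfd]
      exact ih a c
  have he1 : G.dist (g₂.symm (g₁.symm q)) q = G.dist q (g₁ (g₂ q)) := by
    have h2 : G.dist (g₂ (g₂.symm (g₁.symm q))) (g₂ q) = G.dist (g₂.symm (g₁.symm q)) q :=
      aut g₂ _ q
    have h1 : G.dist (g₁ (g₁.symm q)) (g₁ (g₂ q)) = G.dist (g₁.symm q) (g₂ q) := aut g₁ _ _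
    rw [g₁.apply_symm_apply] at h1
    rw [g₂.apply_symm_apply] at h2
    rw [← h2, h1]
  have hone : ∀ k : ℕ, G.dist (f^[k] q) (f^[k+1] q) = G.dist q (g₁ (g₂ q)) := by
    intro k
    rw [Function.iterate_succ_apply, hstep k q (f q), hfa]
  have htwo : ∀ k : ℕ, G.dist (f^[k] q) (f^[k+2] q) =
      G.dist q (g₁ (g₂ q)) + G.dist q (g₁ (g₂ q)) := by
    intro k
    have e : f^[k+2] q = f^[k] (f (f q)) := by
      rw [show k+2 = (k+1)+1 from rfl, Function.iterate_succ_apply,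
        Function.iterate_succ_apply]
    rw [e, hstep]
    have hfq' : f (g₂.symm (g₁.symm q)) = q := by
      rw [hfa, g₂.apply_symm_apply, g₁.apply_symm_apply]
    have h2 := hfd (g₂.symm (g₁.symm q)) (g₁ (g₂ q))
    rw [hfq'] at h2
    rw [hfa q, h2, ← hB, he1]
  have hiter : ∀ n : ℕ, G.dist q (f^[n] q) = n * G.dist q (g₁ (g₂ q)) := by
    have H : ∀ n : ℕ, G.dist q (f^[n] q) = n * G.dist q (g₁ (g₂ q)) ∧
        G.dist q (f^[n+1] q) = (n+1) * G.dist q (g₁ (g₂ q)) := by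
      intro n
      induction n with
      | zero =>
        constructor
        · simp [SimpleGraph.dist_self]
        · rw [zero_add, Function.iterate_one, hfa, one_mul]
      | succ k ih =>
        refine ⟨ih.2, ?_⟩
        have h3 : G.dist (f^[k] q) (f^[k+1] q) ≠ 0 := by rw [hone]; exact hne
        have hcol := collin hT (a := q) (b := f^[k] q) (c := f^[k+1] q)
          (d := f^[k+2] q) ?_ ?_ h3
        · rw [hcol, ih.1, hone, hone]; ring
        · rw [ih.1, hone, ih.2]; ring
        · rw [hone, hone, htwo]
    exact fun n => (H n).1
  intro y
  by_contra hlt'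
  push_neg at hlt'
  have hD : G.dist y (f y) < G.dist q (g₁ (g₂ q)) := by rw [hfa]; exact hlt'
  have hygrow : ∀ n : ℕ, G.dist y (f^[n] y) ≤ n * G.dist y (f y) := by
    intro n
    induction n with
    | zero => simp [SimpleGraph.dist_self]
    | succ k ih =>
      have t := tri y (f^[k] y) (f^[k+1] y)
      have h1 : G.dist (f^[k] y) (f^[k+1] y) = G.dist y (f y) := by
        rw [Function.iterate_succ_apply]; exact hstep k y (f y)
      calc G.dist y (f^[k+1] y) ≤ G.dist y (f^[k] y) + G.dist (f^[k] y) (f^[k+1] y) := t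
        _ ≤ k * G.dist y (f y) + G.dist y (f y) := by rw [h1]; omega
        _ = (k+1) * G.dist y (f y) := by ring
  have hbnd : ∀ n : ℕ, n * G.dist q (g₁ (g₂ q)) ≤
      2 * G.dist q y + n * G.dist y (f y) := by
    intro n
    have t1 := tri q y (f^[n] q)
    have t2 := tri y (f^[n] y) (f^[n] q)
    have h3 : G.dist (f^[n] y) (f^[n] q) = G.dist y q := hstep n y q
    have dqy := dcomm q y
    have key : G.dist q (f^[n] q) ≤ 2 * G.dist q y + G.dist y (f^[n] y) := by omega
    rw [← hiter n]
    exact le_trans key (by have := hygrow n; omega)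
  have hb := hbnd (2 * G.dist q y + 1)
  have hmul : (2 * G.dist q y + 1) * (G.dist y (f y) + 1) ≤
      (2 * G.dist q y + 1) * G.dist q (g₁ (g₂ q)) :=
    Nat.mul_le_mul_left _ (by omega)
  have hfalse : (2 * G.dist q y + 1) * G.dist y (f y) + (2 * G.dist q y + 1) ≤
      2 * G.dist q y + (2 * G.dist q y + 1) * G.dist y (f y) := by
    calc (2 * G.dist q y + 1) * G.dist y (f y) + (2 * G.dist q y + 1)
        = (2 * G.dist q y + 1) * (G.dist y (f y) + 1) := by ring
      _ ≤ (2 * G.dist q y + 1) * G.dist q (g₁ (g₂ q)) := hmul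
      _ ≤ 2 * G.dist q y + (2 * G.dist q y + 1) * G.dist y (f y) := hb
  linarith

end Final
/-- Opposite orientations, overlap of length Δ strictly less than both translation
lengths: the product is hyperbolic of translation length l(g₁) + l(g₂) - 2Δ. -/
theorem stmt6 (G : SimpleGraph V) (hT : G.IsTree) (g₁ g₂ : G ≃g G)
    (h₁ : noInv G g₁) (h₂ : noInv G g₂)
    (hyp₁ : 0 < ell G g₁) (hyp₂ : 0 < ell G g₂)
    (p q : V) (Δ : ℕ)
    (hseg : axisSet G g₁ ∩ axisSet G g₂ = seg G p q)
    (hΔ : G.dist p q = Δ)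
    (hd₁ : translatesToward G g₁ p q) (hd₂ : translatesToward G g₂ q p)
    (hlt : Δ < min (ell G g₁) (ell G g₂)) :
    0 < ell G (g₁ * g₂) ∧
    (ell G (g₁ * g₂) : ℤ) = (ell G g₁ : ℤ) + (ell G g₂ : ℤ) - 2 * Δ := by
  classical
  have hC := hT.isConnected
  have dcomm : ∀ a b : V, G.dist a b = G.dist b a := fun _ _ => SimpleGraph.dist_comm
  have aut : ∀ (g : G ≃g G) (a b : V), G.dist (g a) (g b) = G.dist a b := iso_dist hC
  have ellle : ∀ (g : G ≃g G) (x : V), ell G g ≤ G.dist x (g x) :=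
    fun g x => Nat.sInf_le ⟨x, rfl⟩
  have hΔ1 : Δ < ell G g₁ := lt_of_lt_of_le hlt (min_le_left _ _)
  have hΔ2 : Δ < ell G g₂ := lt_of_lt_of_le hlt (min_le_right _ _)
  have hsegiff : ∀ x : V,
      (G.dist x (g₁ x) = ell G g₁ ∧ G.dist x (g₂ x) = ell G g₂) ↔
      G.dist p x + G.dist x q = G.dist p q := by
    intro x
    have := Set.ext_iff.mp hseg x
    simpa [axisSet, seg, Set.mem_inter_iff, Set.mem_setOf_eq] using this
  have hax : ∀ x : V, G.dist x (g₁ x) = ell G g₁ → G.dist x (g₂ x) = ell G g₂ →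
      G.dist p x + G.dist x q = Δ := by
    intro x hx1 hx2
    rw [← hΔ]
    exact (hsegiff x).mp ⟨hx1, hx2⟩
  have hpax := (hsegiff p).mpr (by simp [SimpleGraph.dist_self])
  have hqax := (hsegiff q).mpr (by simp [SimpleGraph.dist_self])
  have hp1 : G.dist p (g₁ p) = ell G g₁ := hpax.1
  have hp2 : G.dist p (g₂ p) = ell G g₂ := hpax.2
  have hq2 : G.dist q (g₂ q) = ell G g₂ := hqax.2
  have hd1q : G.dist (g₁ p) q + Δ = ell G g₁ := by
    simp only [translatesToward] at hd₁
    rw [hΔ, abs_sub_comm,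
      abs_of_nonneg (by omega : (0:ℤ) ≤ (ell G g₁ : ℤ) - (Δ:ℤ))] at hd₁
    omega
  have hd2p : G.dist (g₂ q) p + Δ = ell G g₂ := by
    simp only [translatesToward] at hd₂
    have hΔ' : G.dist q p = Δ := by rw [dcomm]; exact hΔ
    rw [hΔ', abs_sub_comm,
      abs_of_nonneg (by omega : (0:ℤ) ≤ (ell G g₂ : ℤ) - (Δ:ℤ))] at hd₂
    omega
  have hA := claimA hT g₁ g₂ (ell G g₁) (ell G g₂) Δ p q (ellle g₁) (ellle g₂)
    hp1 hq2 hd1q hd2p hΔ hΔ1 hΔ2 hax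
  have hB := claimB hT g₁ g₂ (ell G g₁) (ell G g₂) Δ p q (ellle g₁) (ellle g₂)
    hp1 hp2 hq2 hd1q hd2p hΔ hΔ1 hΔ2 hax hA
  -- value of the displacement of q
  have hgpb : G.dist (g₁ p) (g₁ (g₂ q)) = G.dist p (g₂ q) := aut g₁ p (g₂ q)
  have hLv : G.dist q (g₁ (g₂ q)) + 2 * Δ = ell G g₁ + ell G g₂ := by
    have := dcomm q (g₁ p)
    have := dcomm p (g₂ q)
    omega
  have hne : G.dist q (g₁ (g₂ q)) ≠ 0 := by omega
  have hlow := prod_lower hT g₁ g₂ q hne hB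
  have hmul : ∀ x : V, (g₁ * g₂) x = g₁ (g₂ x) := fun x => rfl
  have hval : ell G (g₁ * g₂) = G.dist q (g₁ (g₂ q)) := by
    apply le_antisymm
    · have hq' : G.dist q ((g₁ * g₂) q) = G.dist q (g₁ (g₂ q)) := by rw [hmul]
      exact le_trans (ellle (g₁ * g₂) q) (le_of_eq hq')
    · have hnonempty : (Set.range fun x => G.dist x ((g₁ * g₂) x)).Nonempty :=
        ⟨_, ⟨q, rfl⟩⟩
      obtain ⟨y, hy⟩ := Nat.sInf_mem hnonempty
      calc G.dist q (g₁ (g₂ q)) ≤ G.dist y (g₁ (g₂ y)) := hlow y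
        _ = G.dist y ((g₁ * g₂) y) := by rw [hmul]
        _ = ell G (g₁ * g₂) := hy
  constructor
  · rw [hval]; omega
  · rw [hval]; omega
end

section
/- Let g₁, g₂ be hyperbolic isometries of a simplicial tree such that g₁g₂ is elliptic, and suppose their axes intersect along a path [p,q] of length Δ = min{l(g₁), l(g₂)} with g₁ and g₂⁻¹ translating p towards q. Then g₁g₂ fixes a vertex at distance |l(g₁) − l(g₂)|/2 from q. -/
open SimpleGraph

variable {V : Type*}

section Aux

variable {G : SimpleGraph V}

/-- A graph automorphism preserves distances. -/
lemma aux_dist_map (hc : G.Connected) (φ : G ≃g G) (a b : V) :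
    G.dist (φ a) (φ b) = G.dist a b := by
  have key : ∀ (ψ : G ≃g G) (a b : V), G.dist (ψ a) (ψ b) ≤ G.dist a b := by
    intro ψ a b
    obtain ⟨p, hp⟩ := (hc a b).exists_walk_length_eq_dist
    calc G.dist (ψ a) (ψ b) ≤ (p.map ψ.toHom).length := dist_le _
      _ = G.dist a b := by rw [Walk.length_map, hp]
  refine le_antisymm (key φ a b) ?_
  have := key φ.symm (φ a) (φ b)
  simpa using this

lemma aux_ell_inv (G : SimpleGraph V) (g : G ≃g G) : ell G g⁻¹ = ell G g := by
  unfold ell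
  congr 1
  ext n
  simp only [Set.mem_range]
  constructor
  · rintro ⟨x, hx⟩
    refine ⟨g⁻¹ x, ?_⟩
    rwa [← RelIso.apply_inv_self g x, RelIso.inv_apply_self, dist_comm] at hx
    -- goal was: G.dist (g⁻¹ x) (g (g⁻¹ x)) = n
  · rintro ⟨x, hx⟩
    refine ⟨g x, ?_⟩
    rwa [RelIso.inv_apply_self, dist_comm]

lemma aux_getVert_map (f : G →g G) {u v : V} (p : G.Walk u v) (i : ℕ) :
    (p.map f).getVert i = f (p.getVert i) := by
  induction p generalizing i with
  | nil => simp [Walk.getVert]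
  | cons h q ih =>
    cases i with
    | zero => simp
    | succ n => simpa [Walk.getVert_cons_succ] using ih n

lemma aux_dist_getVert_le (hc : G.Connected) {u v : V} (p : G.Walk u v) (i : ℕ) :
    G.dist u (p.getVert i) ≤ i := by
  induction p generalizing i with
  | nil => simp [Walk.getVert, SimpleGraph.dist_self]
  | @cons a b c h q ih =>
    cases i with
    | zero => simp
    | succ n =>
      rw [Walk.getVert_cons_succ]
      calc G.dist a (q.getVert n) ≤ G.dist a b + G.dist b (q.getVert n) :=
            hc.dist_triangle
        _ ≤ 1 + n := by
            have h1 : G.dist a b ≤ 1 := by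
              simpa using dist_le (Walk.cons h Walk.nil)
            exact Nat.add_le_add h1 (ih n)
        _ = n + 1 := by omega

/-- On a geodesic walk, the `i`-th vertex is at distance `i` from the start and
`length - i` from the end. -/
lemma aux_getVert_dist (hc : G.Connected) {u v : V} (p : G.Walk u v)
    (hp : p.length = G.dist u v) {i : ℕ} (hi : i ≤ p.length) :
    G.dist u (p.getVert i) = i ∧ G.dist u (p.getVert i) + G.dist (p.getVert i) v = G.dist u v := by
  have h1 : G.dist u (p.getVert i) ≤ i := aux_dist_getVert_le hc p i
  have h2 : G.dist (p.getVert i) v ≤ p.length - i := by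
    have := aux_dist_getVert_le hc p.reverse (p.length - i)
    rw [Walk.getVert_reverse] at this
    have hii : p.length - (p.length - i) = i := by omega
    rw [hii] at this
    rwa [dist_comm]
  have h3 : G.dist u v ≤ G.dist u (p.getVert i) + G.dist (p.getVert i) v := hc.dist_triangle
  omega

/-- Any vertex on a geodesic walk lies on a geodesic between the endpoints. -/
lemma aux_support_dist (hc : G.Connected) {u v : V} (p : G.Walk u v)
    (hp : p.length = G.dist u v) {y : V} (hy : y ∈ p.support) :
    G.dist u y + G.dist y v = G.dist u v := by
  obtain ⟨i, rfl, hi⟩ := Walk.mem_support_iff_exists_getVert.mp hy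
  exact (aux_getVert_dist hc p hp hi).2

/-- In a tree, adjacent vertices are at different distances from any vertex. -/
lemma aux_adj_dist_ne (hT : G.IsTree) {w a b : V} (hab : G.Adj a b) :
    G.dist a w ≠ G.dist b w := by
  intro hEq
  have hc := hT.isConnected
  obtain ⟨A, hA, hlA⟩ := hc.exists_path_of_dist a w
  obtain ⟨B, hB, hlB⟩ := hc.exists_path_of_dist b w
  have hbA : b ∉ A.support := by
    intro hb
    have h1 := aux_support_dist hc A hlA hb
    have h2 : 0 < G.dist a b := hc.pos_dist_of_ne hab.ne
    omega
  have hPath : (A.cons hab.symm).IsPath := by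
    rw [Walk.cons_isPath_iff]; exact ⟨hA, hbA⟩
  have hEqP := (hT.existsUnique_path b w).unique hPath hB
  have := congrArg Walk.length hEqP
  simp only [Walk.length_cons] at this
  omega

/-- In a tree, the neighbor strictly closer to `w` is unique. -/
lemma aux_unique_closer (hT : G.IsTree) {w y a b : V} (hya : G.Adj y a) (hyb : G.Adj y b)
    (ha : G.dist a w + 1 = G.dist y w) (hb : G.dist b w + 1 = G.dist y w) : a = b := by
  have hc := hT.isConnected
  obtain ⟨A, hA, hlA⟩ := hc.exists_path_of_dist a w
  obtain ⟨B, hB, hlB⟩ := hc.exists_path_of_dist b w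
  have hyA : y ∉ A.support := by
    intro hy
    have := aux_support_dist hc A (by omega) hy
    have : G.dist y w ≤ G.dist a w := by omega
    omega
  have hyB : y ∉ B.support := by
    intro hy
    have := aux_support_dist hc B (by omega) hy
    have : G.dist y w ≤ G.dist b w := by omega
    omega
  have hPA : (A.cons hya).IsPath := by rw [Walk.cons_isPath_iff]; exact ⟨hA, hyA⟩
  have hPB : (B.cons hyb).IsPath := by rw [Walk.cons_isPath_iff]; exact ⟨hB, hyB⟩
  have hEq := (hT.existsUnique_path y w).unique hPA hPB
  have := congrArg (fun (t : G.Walk y w) => t.getVert 1) hEq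
  simpa [Walk.getVert_cons_succ, Walk.getVert_zero] using this

end Aux

/-- If the product is elliptic and the axes intersect along a segment of length exactly
the minimum of the translation lengths, then the product fixes a vertex at distance
half the absolute difference of the lengths from the endpoint q. -/
theorem stmt10 (G : SimpleGraph V) (hT : G.IsTree) (g₁ g₂ : G ≃g G)
    (h₁ : noInv G g₁) (h₂ : noInv G g₂)
    (hyp₁ : 0 < ell G g₁) (hyp₂ : 0 < ell G g₂)
    (hell : ell G (g₁ * g₂) = 0)
    (p q : V)
    (hseg : axisSet G g₁ ∩ axisSet G g₂ = seg G p q)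
    (hΔ : G.dist p q = min (ell G g₁) (ell G g₂))
    (hd₁ : translatesToward G g₁ p q) (hd₂ : translatesToward G g₂⁻¹ p q) :
    ∃ v : V, (g₁ * g₂) v = v ∧
      2 * (G.dist q v : ℤ) = |(ell G g₁ : ℤ) - (ell G g₂ : ℤ)| := by
  classical
  have hc := hT.isConnected
  have hiso : ∀ (ψ : G ≃g G) (a b : V), G.dist (ψ a) (ψ b) = G.dist a b :=
    fun ψ a b => aux_dist_map hc ψ a b
  -- The displacement of q under h := g₁ * g₂ equals |l₁ - l₂|.
  have hDint : (G.dist q ((g₁ * g₂) q) : ℤ) = |(ell G g₁ : ℤ) - (ell G g₂ : ℤ)| := by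
    unfold translatesToward at hd₁ hd₂
    rw [aux_ell_inv] at hd₂
    rcases le_total (ell G g₂) (ell G g₁) with hle | hle
    · have hpq : G.dist p q = ell G g₂ := by rw [hΔ, min_eq_right hle]
      have h2 : G.dist (g₂⁻¹ p) q = 0 := by
        rw [hpq] at hd₂; simpa using hd₂
      have h2' : g₂⁻¹ p = q := hc.dist_eq_zero_iff.mp h2
      have hg2q : g₂ q = p := by rw [← h2', RelIso.apply_inv_self]
      have hhq : (g₁ * g₂) q = g₁ p := by rw [RelIso.mul_apply, hg2q]
      rw [hhq, SimpleGraph.dist_comm, hd₁, hpq, abs_sub_comm]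
    · have hpq : G.dist p q = ell G g₁ := by rw [hΔ, min_eq_left hle]
      have h2 : G.dist (g₁ p) q = 0 := by
        rw [hpq] at hd₁; simpa using hd₁
      have h2' : g₁ p = q := hc.dist_eq_zero_iff.mp h2
      have hhq : G.dist q ((g₁ * g₂) q) = G.dist (g₂⁻¹ p) q := by
        have e1 : G.dist q ((g₁ * g₂) q) = G.dist q (g₁ (g₂ q)) := by rw [RelIso.mul_apply]
        have e2 : G.dist q (g₁ (g₂ q)) = G.dist (g₁ p) (g₁ (g₂ q)) := by rw [h2']
        have e3 : G.dist (g₁ p) (g₁ (g₂ q)) = G.dist p (g₂ q) := hiso g₁ p (g₂ q)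
        have e4 : G.dist p (g₂ q) = G.dist (g₂⁻¹ p) (g₂⁻¹ (g₂ q)) := (hiso g₂⁻¹ p (g₂ q)).symm
        have e5 : (g₂⁻¹) (g₂ q) = q := RelIso.inv_apply_self g₂ q
        rw [e1, e2, e3, e4, e5]
      rw [hhq, hd₂, hpq]
  -- h has a fixed vertex.
  obtain ⟨w, hw⟩ : ∃ w : V, (g₁ * g₂) w = w := by
    have h0 : sInf (Set.range fun x => G.dist x ((g₁ * g₂) x)) = 0 := hell
    rcases Nat.sInf_eq_zero.mp h0 with hmem | hemp
    · obtain ⟨w, hw⟩ := hmem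
      simp only at hw
      exact ⟨w, (hc.dist_eq_zero_iff.mp hw).symm⟩
    · haveI : Nonempty V := hc.nonempty
      exact absurd (Set.range_nonempty _) (by rw [hemp]; exact Set.not_nonempty_empty)
  have hrq : G.dist ((g₁ * g₂) q) w = G.dist q w := by
    have := hiso (g₁ * g₂) q w
    rw [hw] at this
    exact this
  by_cases hD0 : G.dist q ((g₁ * g₂) q) = 0
  · refine ⟨q, ?_, ?_⟩
    · exact (hc.dist_eq_zero_iff.mp hD0).symm
    · rw [SimpleGraph.dist_self, ← hDint, hD0]
      simp
  -- Geodesics from q and from (g₁ * g₂) q to the fixed vertex w.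
  obtain ⟨P, hPpath, hPgeo⟩ := hc.exists_path_of_dist q w
  obtain ⟨hP, hPget, hPgeo'⟩ :
      ∃ hP : G.Walk ((g₁ * g₂) q) w, (∀ i, hP.getVert i = (g₁ * g₂) (P.getVert i)) ∧
        hP.length = G.dist ((g₁ * g₂) q) w := by
    refine ⟨(P.map (g₁ * g₂).toHom).copy rfl hw, fun i => ?_, ?_⟩
    · rw [Walk.getVert_copy, aux_getVert_map]
      rfl
    · rw [Walk.length_copy, Walk.length_map, hPgeo, hrq]
  -- The geodesic from q to (g₁ * g₂) q.
  obtain ⟨Q, hQpath, hQgeo⟩ := hc.exists_path_of_dist q ((g₁ * g₂) q)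
  -- The support of Q is covered by the supports of P and hP.
  have hcover : ∀ y ∈ Q.support, y ∈ P.support ∨ y ∈ hP.support := by
    intro y hy
    have hQW : Q = (P.append hP.reverse).bypass :=
      (hT.existsUnique_path q ((g₁ * g₂) q)).unique hQpath (P.append hP.reverse).bypass_isPath
    rw [hQW] at hy
    have hy' := Walk.support_bypass_subset _ hy
    rw [Walk.mem_support_append_iff] at hy'
    rcases hy' with h1 | h1
    · exact Or.inl h1
    · right
      rwa [Walk.support_reverse, List.mem_reverse] at h1
  -- Facts about vertices of Q.
  have hQvert : ∀ i ≤ G.dist q ((g₁ * g₂) q), G.dist q (Q.getVert i) = i ∧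
      G.dist q (Q.getVert i) + G.dist (Q.getVert i) ((g₁ * g₂) q) = G.dist q ((g₁ * g₂) q) := by
    intro i hi
    exact aux_getVert_dist hc Q hQgeo (by omega)
  -- the greatest index of a vertex of Q lying on P
  obtain ⟨k, hk⟩ : ∃ k,
      Nat.findGreatest (fun i => Q.getVert i ∈ P.support) (G.dist q ((g₁ * g₂) q)) = k :=
    ⟨_, rfl⟩
  have hkle : k ≤ G.dist q ((g₁ * g₂) q) := hk ▸ Nat.findGreatest_le _
  have hkP : Q.getVert k ∈ P.support := by
    have h0 : Q.getVert 0 ∈ P.support := by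
      rw [Walk.getVert_zero]; exact P.start_mem_support
    rw [← hk]
    exact Nat.findGreatest_spec (P := fun i => Q.getVert i ∈ P.support) (m := 0)
      (Nat.zero_le _) h0
  have hkD : k ≠ G.dist q ((g₁ * g₂) q) := by
    intro hkDeq
    have hhqP : Q.getVert (G.dist q ((g₁ * g₂) q)) ∈ P.support := hkDeq ▸ hkP
    have hQD : Q.getVert (G.dist q ((g₁ * g₂) q)) = (g₁ * g₂) q :=
      Q.getVert_of_length_le (by omega)
    rw [hQD] at hhqP
    have h1 := aux_support_dist hc P hPgeo hhqP
    rw [hrq] at h1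
    omega
  have hklt : k < G.dist q ((g₁ * g₂) q) := lt_of_le_of_ne hkle hkD
  have hk1P : Q.getVert (k + 1) ∉ P.support := by
    have h2 := Nat.findGreatest_is_greatest (P := fun i => Q.getVert i ∈ P.support)
        (n := G.dist q ((g₁ * g₂) q)) (k := k + 1) (by omega) (by omega)
    simpa using h2
  have hk1hP : Q.getVert (k + 1) ∈ hP.support := by
    rcases hcover _ (Walk.mem_support_iff_exists_getVert.mpr ⟨k + 1, rfl, by omega⟩)
      with h1 | h1
    · exact absurd h1 hk1P
    · exact h1
  -- distances
  obtain ⟨hqa, hqahq⟩ := hQvert k (le_of_lt hklt)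
  obtain ⟨hqb, hqbhq⟩ := hQvert (k + 1) (by omega)
  have haw : k + G.dist (Q.getVert k) w = G.dist q w := by
    have h1 := aux_support_dist hc P hPgeo hkP
    omega
  have hbw : G.dist ((g₁ * g₂) q) (Q.getVert (k + 1)) + G.dist (Q.getVert (k + 1)) w
      = G.dist q w := by
    have h1 := aux_support_dist hc hP hPgeo' hk1hP
    omega
  have hhqb : G.dist ((g₁ * g₂) q) (Q.getVert (k + 1))
      = G.dist q ((g₁ * g₂) q) - (k + 1) := by
    rw [SimpleGraph.dist_comm]
    omega
  -- adjacency of Qₖ and Q_{k+1}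
  have hadj : G.Adj (Q.getVert k) (Q.getVert (k + 1)) := Q.adj_getVert_succ (by omega)
  have hdab : G.dist (Q.getVert k) (Q.getVert (k + 1)) = 1 := dist_eq_one_iff_adj.mpr hadj
  have htri1 : G.dist (Q.getVert k) w ≤ 1 + G.dist (Q.getVert (k + 1)) w := by
    have := hc.dist_triangle (u := Q.getVert k) (v := Q.getVert (k + 1)) (w := w)
    omega
  have htri2 : G.dist (Q.getVert (k + 1)) w ≤ 1 + G.dist (Q.getVert k) w := by
    have h3 := hc.dist_triangle (u := Q.getVert (k + 1)) (v := Q.getVert k) (w := w)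
    have h4 : G.dist (Q.getVert (k + 1)) (Q.getVert k) = 1 := by
      rw [SimpleGraph.dist_comm]; omega
    omega
  have hne : G.dist (Q.getVert k) w ≠ G.dist (Q.getVert (k + 1)) w := aux_adj_dist_ne hT hadj
  have hDcase : G.dist q ((g₁ * g₂) q) = 2 * k ∨ G.dist q ((g₁ * g₂) q) = 2 * k + 2 := by
    omega
  -- Qₖ is on P at index k
  have haP : Q.getVert k = P.getVert k := by
    obtain ⟨j, hgj, hj⟩ := Walk.mem_support_iff_exists_getVert.mp hkP
    have hdj := (aux_getVert_dist hc P hPgeo hj).1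
    rw [hgj] at hdj
    have hjk : j = k := by omega
    rw [← hgj, hjk]
  rcases hDcase with hDk | hDk
  · -- D = 2k : the vertex Qₖ is fixed.
    have hk1 : 1 ≤ k := by omega
    -- Q_{k+1} lies on hP at index k - 1
    have hbhP : Q.getVert (k + 1) = hP.getVert (k - 1) := by
      obtain ⟨j, hgj, hj⟩ := Walk.mem_support_iff_exists_getVert.mp hk1hP
      have hdj := (aux_getVert_dist hc hP hPgeo' hj).1
      rw [hgj] at hdj
      have hjk : j = k - 1 := by omega
      rw [← hgj, hjk]
    have hadj2 : G.Adj (Q.getVert (k + 1)) (hP.getVert k) := by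
      have hlt : k - 1 < hP.length := by omega
      have h5 := hP.adj_getVert_succ hlt
      rw [← hbhP] at h5
      have hkk : k - 1 + 1 = k := by omega
      rwa [hkk] at h5
    -- (g₁*g₂) Qₖ = hP.getVert k is at distance (dist q w) - k from w
    have hhaw : k + G.dist (hP.getVert k) w = G.dist q w := by
      have h6 := (aux_getVert_dist hc hP hPgeo' (i := k) (by omega)).2
      have h7 := (aux_getVert_dist hc hP hPgeo' (i := k) (by omega)).1
      rw [hrq] at h6
      omega
    have hfix : Q.getVert k = hP.getVert k := by
      apply aux_unique_closer hT (y := Q.getVert (k + 1)) (w := w) hadj.symm hadj2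
      · omega
      · omega
    refine ⟨Q.getVert k, ?_, ?_⟩
    · rw [hPget k, ← haP] at hfix
      exact hfix.symm
    · rw [hqa, ← hDint]
      push_cast
      omega
  · -- D = 2k + 2 : contradiction
    have hcw : k + 1 + G.dist (P.getVert (k + 1)) w = G.dist q w := by
      have h6 := (aux_getVert_dist hc P hPgeo (i := k + 1) (by omega)).2
      have h7 := (aux_getVert_dist hc P hPgeo (i := k + 1) (by omega)).1
      omega
    have hadjac : G.Adj (Q.getVert k) (P.getVert (k + 1)) := by
      rw [haP]
      exact P.adj_getVert_succ (by omega)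
    have hcb : P.getVert (k + 1) = Q.getVert (k + 1) := by
      apply aux_unique_closer hT (y := Q.getVert k) (w := w) hadjac hadj
      · omega
      · omega
    have hfin : Q.getVert (k + 1) ∈ P.support := by
      rw [← hcb]
      exact Walk.mem_support_iff_exists_getVert.mpr ⟨k + 1, rfl, by omega⟩
    exact absurd hfin hk1P
end

section
/- (Ping Pong Lemma for trees.) Let g₁, ..., gₙ be hyperbolic isometries of a simplicial tree with axes γ₁, ..., γₙ. Suppose that for each i there is an open segment Pᵢ ⊆ γᵢ of length l(gᵢ) such that the union over j ≠ i of the projections Proj_{γᵢ}(γⱼ) is contained in Pᵢ. Then the group generated by g₁, ..., gₙ is free of rank n. -/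
open SimpleGraph

variable {V : Type*}

namespace PP
open Pointwise Cardinal

variable {G : SimpleGraph V}

lemma dist_pres (hc : G.Connected) (f : G ≃g G) (x y : V) :
    G.dist (f x) (f y) = G.dist x y := by
  have h1 : ∀ (f : G ≃g G) (x y : V), G.dist (f x) (f y) ≤ G.dist x y := by
    intro f x y
    obtain ⟨w, hw⟩ := hc.exists_walk_length_eq_dist x y
    calc G.dist (f x) (f y) ≤ (w.map f.toHom).length := dist_le _
    _ = G.dist x y := by rw [SimpleGraph.Walk.length_map, hw]
  refine le_antisymm (h1 f x y) ?_
  have h2 := h1 f.symm (f x) (f y)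
  simpa using h2

lemma seg_self_left (p q : V) : p ∈ seg G p q := by simp [seg]

lemma seg_self_right (p q : V) : q ∈ seg G p q := by simp [seg]

lemma dist_getVert_le (hc : G.Connected) {a b : V} (w : G.Walk a b) (s : ℕ) :
    ∀ t, s ≤ t → G.dist (w.getVert s) (w.getVert t) ≤ t - s := by
  intro t
  induction t with
  | zero => intro h; obtain rfl : s = 0 := Nat.le_zero.mp h; simp
  | succ t ih =>
    intro h
    rcases Nat.lt_or_ge t w.length with ht | ht
    · rcases Nat.eq_or_lt_of_le h with rfl | h'
      · simp
      · have hst : s ≤ t := Nat.lt_succ_iff.mp h'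
        have hadj := w.adj_getVert_succ ht
        have h1 : G.dist (w.getVert t) (w.getVert (t+1)) = 1 :=
          (G.dist_eq_one_iff_adj).mpr hadj
        calc G.dist (w.getVert s) (w.getVert (t+1))
            ≤ G.dist (w.getVert s) (w.getVert t) + G.dist (w.getVert t) (w.getVert (t+1)) :=
              hc.dist_triangle
          _ ≤ (t - s) + 1 := by have := ih hst; omega
          _ ≤ (t + 1) - s := by omega
    · have h1 : w.getVert (t+1) = b := w.getVert_of_length_le (by omega)
      rcases Nat.lt_or_ge t s with hts | hst
      · obtain rfl : s = t + 1 := by omega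
        simp
      · have h2 : w.getVert t = b := w.getVert_of_length_le ht
        have h3 : G.dist (w.getVert s) (w.getVert (t+1)) = G.dist (w.getVert s) (w.getVert t) := by
          rw [h1, h2]
        have := ih hst
        omega

lemma geo_getVert_dist (hc : G.Connected) {a b : V} {w : G.Walk a b}
    (hw : w.length = G.dist a b) {s t : ℕ} (hst : s ≤ t) (ht : t ≤ w.length) :
    G.dist (w.getVert s) (w.getVert t) = t - s := by
  have h1 : G.dist a (w.getVert s) ≤ s := by
    have := dist_getVert_le hc w 0 s (Nat.zero_le s)
    simpa using this
  have h2 : G.dist (w.getVert t) b ≤ w.length - t := by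
    have := dist_getVert_le hc w t w.length ht
    simpa [w.getVert_length] using this
  have h3 := dist_getVert_le hc w s t hst
  have t1 : G.dist a b ≤ G.dist a (w.getVert t) + G.dist (w.getVert t) b := hc.dist_triangle
  have t2 : G.dist a (w.getVert t) ≤ G.dist a (w.getVert s) + G.dist (w.getVert s) (w.getVert t) :=
    hc.dist_triangle
  omega

lemma tree_path_length (hT : G.IsTree) {a b : V} {p : G.Walk a b} (hp : p.IsPath) :
    p.length = G.dist a b := by
  obtain ⟨q, hq, hql⟩ := hT.isConnected.exists_path_of_dist a b
  have h := hT.IsAcyclic.path_unique ⟨p, hp⟩ ⟨q, hq⟩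
  have : p = q := congrArg Subtype.val h
  rw [this, hql]

lemma mem_geo_support (hT : G.IsTree) {a b x : V} (hx : x ∈ seg G a b)
    {w : G.Walk a b} (hw : w.length = G.dist a b) : x ∈ w.support := by
  obtain ⟨w1, hw1⟩ := hT.isConnected.exists_walk_length_eq_dist a x
  obtain ⟨w2, hw2⟩ := hT.isConnected.exists_walk_length_eq_dist x b
  have hWlen : (w1.append w2).length = G.dist a b := by
    rw [SimpleGraph.Walk.length_append, hw1, hw2]; exact hx
  have hWp : (w1.append w2).IsPath := SimpleGraph.Walk.isPath_of_length_eq_dist _ hWlen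
  have hwp : w.IsPath := SimpleGraph.Walk.isPath_of_length_eq_dist _ hw
  have h := hT.IsAcyclic.path_unique ⟨w, hwp⟩ ⟨w1.append w2, hWp⟩
  have h2 : w = w1.append w2 := congrArg Subtype.val h
  rw [h2]
  exact (SimpleGraph.Walk.mem_support_append_iff _ _).mpr (Or.inl w1.end_mem_support)

lemma seg_index (hT : G.IsTree) {a b x : V} (hx : x ∈ seg G a b)
    {w : G.Walk a b} (hw : w.length = G.dist a b) :
    ∃ i, i ≤ w.length ∧ w.getVert i = x ∧ G.dist a x = i := by
  have hs := mem_geo_support hT hx hw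
  obtain ⟨i, hgi, hil⟩ := SimpleGraph.Walk.mem_support_iff_exists_getVert.mp hs
  refine ⟨i, hil, hgi, ?_⟩
  have := geo_getVert_dist hT.isConnected hw (Nat.zero_le i) hil
  rw [w.getVert_zero, hgi] at this
  omega

lemma seg_dist_int (hT : G.IsTree) {a b x y : V} (hx : x ∈ seg G a b) (hy : y ∈ seg G a b) :
    (G.dist x y : ℤ) = |(G.dist a x : ℤ) - (G.dist a y : ℤ)| := by
  obtain ⟨w, hw⟩ := hT.isConnected.exists_walk_length_eq_dist a b
  obtain ⟨i, hil, hgi, hdi⟩ := seg_index hT hx hw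
  obtain ⟨j, hjl, hgj, hdj⟩ := seg_index hT hy hw
  rcases le_total i j with hij | hij
  · have := geo_getVert_dist hT.isConnected hw hij hjl
    rw [hgi, hgj] at this
    rw [hdi, hdj, abs_sub_comm]
    rw [abs_of_nonneg (by omega : (0:ℤ) ≤ (j:ℤ) - i)]
    omega
  · have := geo_getVert_dist hT.isConnected hw hij hil
    rw [hgi, hgj] at this
    rw [hdi, hdj, abs_of_nonneg (by omega : (0:ℤ) ≤ (i:ℤ) - j), G.dist_comm]
    omega

lemma seg_trans (hc : G.Connected) {a b m y : V} (h1 : m ∈ seg G a b) (h2 : y ∈ seg G a m) :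
    y ∈ seg G a b ∧ m ∈ seg G y b := by
  simp only [seg, Set.mem_setOf_eq] at *
  have t1 : G.dist a b ≤ G.dist a y + G.dist y b := hc.dist_triangle
  have t2 : G.dist y b ≤ G.dist y m + G.dist m b := hc.dist_triangle
  omega


lemma step (hT : G.IsTree) {m x y : V} (h : m ∉ seg G x y) :
    ∃ u, G.Adj m u ∧ G.dist u x + 1 = G.dist m x ∧ G.dist u y + 1 = G.dist m y := by
  have hc := hT.isConnected
  have hmx : m ≠ x := by rintro rfl; exact h (by simp [seg])
  have hmy : m ≠ y := by rintro rfl; exact h (by simp [seg, G.dist_comm])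
  obtain ⟨w1, hw1⟩ := hc.exists_walk_length_eq_dist m x
  obtain ⟨w2, hw2⟩ := hc.exists_walk_length_eq_dist m y
  have hp1 : w1.IsPath := SimpleGraph.Walk.isPath_of_length_eq_dist _ hw1
  have hp2 : w2.IsPath := SimpleGraph.Walk.isPath_of_length_eq_dist _ hw2
  have hl1 : 1 ≤ w1.length := by
    rw [hw1]; exact hc.pos_dist_of_ne hmx
  have hl2 : 1 ≤ w2.length := by
    rw [hw2]; exact hc.pos_dist_of_ne hmy
  by_cases hsh : ∃ z, z ≠ m ∧ z ∈ w1.support ∧ z ∈ w2.support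
  · obtain ⟨z, hzm, hz1, hz2⟩ := hsh
    obtain ⟨i, hgi, hil⟩ := SimpleGraph.Walk.mem_support_iff_exists_getVert.mp hz1
    obtain ⟨j, hgj, hjl⟩ := SimpleGraph.Walk.mem_support_iff_exists_getVert.mp hz2
    have hdi : G.dist m z = i := by
      have := geo_getVert_dist hc hw1 (Nat.zero_le i) hil
      rw [w1.getVert_zero, hgi] at this; omega
    have hdj : G.dist m z = j := by
      have := geo_getVert_dist hc hw2 (Nat.zero_le j) hjl
      rw [w2.getVert_zero, hgj] at this; omega
    have hi1 : 1 ≤ i := by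
      rcases Nat.eq_zero_or_pos i with rfl | h'
      · exact absurd (by rw [← hgi, w1.getVert_zero]) hzm
      · omega
    have hadj1 : G.Adj m (w1.getVert 1) := by
      have := w1.adj_getVert_succ (show 0 < w1.length by omega)
      simpa using this
    refine ⟨w1.getVert 1, hadj1, ?_, ?_⟩
    · have := geo_getVert_dist hc hw1 hl1 (le_refl _)
      rw [w1.getVert_length] at this
      omega
    · have hu1 : G.dist (w1.getVert 1) z = i - 1 := by
        have := geo_getVert_dist hc hw1 hi1 hil
        rw [hgi] at this; omega
      have hzy : G.dist z y = w2.length - j := by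
        have := geo_getVert_dist hc hw2 hjl (le_refl _)
        rw [w2.getVert_length, hgj] at this; omega
      have hle : G.dist (w1.getVert 1) y ≤ (i - 1) + (w2.length - j) := by
        have := hc.dist_triangle (u := w1.getVert 1) (v := z) (w := y)
        omega
      have hmu : G.dist m (w1.getVert 1) = 1 := dist_eq_one_iff_adj.mpr hadj1
      have hge : G.dist m y ≤ 1 + G.dist (w1.getVert 1) y := by
        have := hc.dist_triangle (u := m) (v := w1.getVert 1) (w := y)
        omega
      omega
  · exfalso
    push_neg at hsh
    apply h
    have hWp : (w1.reverse.append w2).IsPath := by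
      rw [SimpleGraph.Walk.isPath_def, SimpleGraph.Walk.support_append,
        SimpleGraph.Walk.support_reverse]
      refine List.Nodup.append (List.nodup_reverse.mpr hp1.support_nodup) (hp2.support_nodup.tail) ?_
      intro z hz1 hz2
      have hz1' : z ∈ w1.support := List.mem_reverse.mp hz1
      have hz2' : z ∈ w2.support := List.mem_of_mem_tail hz2
      have hzm : z ≠ m := by
        rintro rfl
        have hnd := hp2.support_nodup
        rw [w2.support_eq_cons] at hnd
        exact (List.nodup_cons.mp hnd).1 hz2
      exact hsh z hzm hz1' hz2'
    have hWl : (w1.reverse.append w2).length = G.dist x y :=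
      tree_path_length hT hWp
    rw [SimpleGraph.Walk.length_append, SimpleGraph.Walk.length_reverse] at hWl
    show G.dist x m + G.dist m y = G.dist x y
    have hxm : G.dist x m = w1.length := by rw [hw1, SimpleGraph.dist_comm]
    omega

lemma median (hT : G.IsTree) (a b c : V) :
    ∃ m, m ∈ seg G a b ∧ m ∈ seg G a c ∧ m ∈ seg G b c := by
  have hc := hT.isConnected
  set f : V → ℕ := fun x => G.dist x a + G.dist x b + G.dist x c with hf
  have hne : (Set.range f).Nonempty := ⟨f a, a, rfl⟩
  obtain ⟨m, hm⟩ := Nat.sInf_mem hne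
  have hmin : ∀ u, f m ≤ f u := by
    intro u
    rw [hm]
    exact Nat.sInf_le ⟨u, rfl⟩
  have hfm : f m ≤ f m := le_refl _
  refine ⟨m, ?_, ?_, ?_⟩
  · by_contra hmem
    obtain ⟨u, hadj, hux, huy⟩ := step hT hmem
    have hum : G.dist u m = 1 := dist_eq_one_iff_adj.mpr hadj.symm
    have h3 : G.dist u c ≤ G.dist u m + G.dist m c := hc.dist_triangle
    have hle := hmin u
    rw [hf] at hle
    simp only at hle
    omega
  · by_contra hmem
    obtain ⟨u, hadj, hux, huy⟩ := step hT hmem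
    have hum : G.dist u m = 1 := dist_eq_one_iff_adj.mpr hadj.symm
    have h3 : G.dist u b ≤ G.dist u m + G.dist m b := hc.dist_triangle
    have hle := hmin u
    rw [hf] at hle
    simp only at hle
    omega
  · by_contra hmem
    obtain ⟨u, hadj, hux, huy⟩ := step hT hmem
    have hum : G.dist u m = 1 := dist_eq_one_iff_adj.mpr hadj.symm
    have h3 : G.dist u a ≤ G.dist u m + G.dist m a := hc.dist_triangle
    have hle := hmin u
    rw [hf] at hle
    simp only at hle
    omega

lemma concat (hT : G.IsTree) {a b c e : V} (h1 : b ∈ seg G a c) (h2 : c ∈ seg G b e)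
    (hbc : b ≠ c) :
    G.dist a e = G.dist a b + G.dist b c + G.dist c e := by
  have hc := hT.isConnected
  obtain ⟨m, hm1, hm2, hm3⟩ := median hT a c e
  have hbm := seg_dist_int hT h1 hm1
  simp only [seg, Set.mem_setOf_eq] at h1 h2 hm1 hm2 hm3
  have hbe : G.dist b e ≤ G.dist b m + G.dist m e := hc.dist_triangle
  have hpos : 0 < G.dist b c := hc.pos_dist_of_ne hbc
  have hcm : G.dist c m = 0 := by
    have hmc : G.dist m c = G.dist a c - G.dist a m := by omega
    have hmcomm : G.dist m c = G.dist c m := SimpleGraph.dist_comm ..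
    have hbmc : G.dist b m = G.dist m b := SimpleGraph.dist_comm ..
    rcases abs_cases ((G.dist a b : ℤ) - (G.dist a m : ℤ)) with ⟨habs, _⟩ | ⟨habs, _⟩ <;>
      omega
  obtain rfl : m = c := (hc.dist_eq_zero_iff).mp (by rwa [SimpleGraph.dist_comm] at hcm)
  omega

variable {g : G ≃g G}

lemma inv_apply_self (g : G ≃g G) (x : V) : g (g⁻¹ x) = x := by simp
lemma self_apply_inv (g : G ≃g G) (x : V) : g⁻¹ (g x) = x := by simp

lemma ell_le (g : G ≃g G) (x : V) : ell G g ≤ G.dist x (g x) := Nat.sInf_le ⟨x, rfl⟩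

lemma axis_dist {x : V} (hx : x ∈ axisSet G g) : G.dist x (g x) = ell G g := hx

lemma axis_apply (hc : G.Connected) {x : V} (hx : x ∈ axisSet G g) : g x ∈ axisSet G g := by
  show G.dist (g x) (g (g x)) = ell G g
  rw [dist_pres hc g]; exact hx

lemma ell_inv (g : G ≃g G) : ell G g⁻¹ = ell G g := by
  unfold ell
  congr 1
  ext k
  constructor
  · rintro ⟨x, rfl⟩
    refine ⟨g⁻¹ x, ?_⟩
    show G.dist (g⁻¹ x) (g (g⁻¹ x)) = G.dist x (g⁻¹ x)
    rw [inv_apply_self, SimpleGraph.dist_comm]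
  · rintro ⟨x, rfl⟩
    refine ⟨g x, ?_⟩
    show G.dist (g x) (g⁻¹ (g x)) = G.dist x (g x)
    rw [self_apply_inv, SimpleGraph.dist_comm]

lemma axisSet_inv (hc : G.Connected) (g : G ≃g G) : axisSet G g⁻¹ = axisSet G g := by
  ext x
  show G.dist x (g⁻¹ x) = ell G g⁻¹ ↔ G.dist x (g x) = ell G g
  rw [ell_inv]
  have : G.dist x (g⁻¹ x) = G.dist x (g x) := by
    rw [← dist_pres hc g x (g⁻¹ x), inv_apply_self, SimpleGraph.dist_comm]
  rw [this]

lemma noInv_inv (h : noInv G g) : noInv G g⁻¹ := by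
  intro x y hadj ⟨h1, h2⟩
  exact h x y hadj ⟨by rw [← h2, inv_apply_self], by rw [← h1, inv_apply_self]⟩

lemma dist_inv (hc : G.Connected) (g : G ≃g G) (x : V) : G.dist x (g⁻¹ x) = G.dist x (g x) := by
  rw [← dist_pres hc g x (g⁻¹ x), inv_apply_self, SimpleGraph.dist_comm]

lemma axis_inv_apply (hc : G.Connected) {x : V} (hx : x ∈ axisSet G g) :
    g⁻¹ x ∈ axisSet G g := by
  rw [← axisSet_inv hc g] at hx ⊢
  exact axis_apply hc hx

lemma seg_axis_subset (hc : G.Connected) {x : V} (hx : x ∈ axisSet G g) :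
    seg G x (g x) ⊆ axisSet G g := by
  intro z hz
  simp only [seg, Set.mem_setOf_eq] at hz
  have h1 : G.dist (g x) (g z) = G.dist x z := dist_pres hc g x z
  have h2 : G.dist z (g z) ≤ G.dist z (g x) + G.dist (g x) (g z) := hc.dist_triangle
  have h3 : ell G g ≤ G.dist z (g z) := ell_le g z
  have h4 : G.dist x (g x) = ell G g := hx
  have : G.dist z (g z) = ell G g := by omega
  exact this

lemma dist_two (hT : G.IsTree) (hni : noInv G g) (hl : 0 < ell G g)
    {x : V} (hx : x ∈ axisSet G g) : G.dist x (g (g x)) = 2 * ell G g := by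
  have hc := hT.isConnected
  set L := ell G g with hL
  by_contra hne
  obtain ⟨m, h1, h2, h3⟩ := median hT x (g x) (g (g x))
  have hgx : g x ∈ axisSet G g := axis_apply hc hx
  have e1 : G.dist x m + G.dist m (g x) = L := by
    have h1' := h1; simp only [seg, Set.mem_setOf_eq] at h1'
    rwa [show G.dist x (g x) = L from hx] at h1'
  have e2 : G.dist (g x) m + G.dist m (g (g x)) = L := by
    have h3' := h3; simp only [seg, Set.mem_setOf_eq] at h3'
    rwa [show G.dist (g x) (g (g x)) = L from hgx] at h3'
  have ecomm : G.dist m (g x) = G.dist (g x) m := SimpleGraph.dist_comm ..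
  have e3 : G.dist x m + G.dist m (g (g x)) = G.dist x (g (g x)) := by
    have h2' := h2; simp only [seg, Set.mem_setOf_eq] at h2'; exact h2'
  set i := G.dist x m with hi
  have hmgg : G.dist m (g (g x)) = i := by omega
  have hxgg : G.dist x (g (g x)) = 2 * i := by omega
  have hiL : i ≤ L := by omega
  have hiL' : i < L := by
    rcases Nat.lt_or_ge i L with h | h
    · exact h
    · exfalso; apply hne; omega
  -- m is on the axis
  have hm_ax : m ∈ axisSet G g := seg_axis_subset hc hx h1
  -- d(m, g m) = L and g x ∈ seg m (g m)
  have hgm : G.dist (g x) (g m) = i := by rw [dist_pres hc g]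
  have hmgm : G.dist m (g m) = L := by
    have t : G.dist m (g m) ≤ G.dist m (g x) + G.dist (g x) (g m) := hc.dist_triangle
    have t2 : L ≤ G.dist m (g m) := ell_le g m
    omega
  have hseg1 : g x ∈ seg G m (g m) := by
    simp only [seg, Set.mem_setOf_eq]
    omega
  have hseg2 : g (g x) ∈ seg G m (g m) := by
    simp only [seg, Set.mem_setOf_eq]
    have : G.dist (g (g x)) (g m) = G.dist (g x) m := dist_pres hc g ..
    omega
  have habs := seg_dist_int hT hseg1 hseg2
  have hgxgg : G.dist (g x) (g (g x)) = L := axis_dist hgx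
  have hi0 : i = 0 := by
    rcases abs_cases ((G.dist m (g x) : ℤ) - (G.dist m (g (g x)) : ℤ)) with ⟨h', _⟩ | ⟨h', _⟩ <;>
      omega
  -- so g (g x) = x
  have hggx : g (g x) = x := by
    have : G.dist x (g (g x)) = 0 := by omega
    exact ((hc.dist_eq_zero_iff).mp this).symm
  rcases Nat.lt_or_ge L 2 with hL1 | hL2
  · -- L = 1 : inversion
    have hL1' : L = 1 := by omega
    have hadj : G.Adj x (g x) := dist_eq_one_iff_adj.mp (by rw [axis_dist hx, ← hL, hL1'])
    exact hni x (g x) hadj ⟨rfl, hggx⟩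
  · -- L ≥ 2
    obtain ⟨w, hw⟩ := hc.exists_walk_length_eq_dist x (g x)
    have hwl : w.length = L := by rw [hw, axis_dist hx]
    set u := w.getVert 1 with hu
    have hxu : G.dist x u = 1 := by
      have := geo_getVert_dist hc hw (show (0:ℕ) ≤ 1 by omega) (by omega)
      simpa using this
    have hugx : G.dist u (g x) = L - 1 := by
      have := geo_getVert_dist hc hw (show (1:ℕ) ≤ w.length by omega) (le_refl _)
      rw [w.getVert_length, ← hu] at this
      omega
    have hgxu : G.dist (g x) (g u) = 1 := by rw [dist_pres hc g]; exact hxu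
    have hgux : G.dist (g u) x = L - 1 := by
      have : G.dist (g u) (g (g x)) = L - 1 := by rw [dist_pres hc g]; exact hugx
      rwa [hggx] at this
    have hu_seg : u ∈ seg G x (g x) := by
      simp only [seg, Set.mem_setOf_eq]
      rw [show G.dist x (g x) = L from hx]
      omega
    have hgu_seg : g u ∈ seg G x (g x) := by
      simp only [seg, Set.mem_setOf_eq]
      rw [show G.dist x (g x) = L from hx]
      have h1' : G.dist x (g u) = L - 1 := by rw [SimpleGraph.dist_comm]; exact hgux
      have h2' : G.dist (g u) (g x) = 1 := by rw [SimpleGraph.dist_comm]; exact hgxu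
      omega
    have habs2 := seg_dist_int hT hu_seg hgu_seg
    have hugu : L ≤ G.dist u (g u) := ell_le g u
    have hxgu : G.dist x (g u) = L - 1 := by rw [SimpleGraph.dist_comm]; exact hgux
    rcases abs_cases ((G.dist x u : ℤ) - (G.dist x (g u) : ℤ)) with ⟨h', _⟩ | ⟨h', _⟩ <;>
      omega

lemma lemB (hT : G.IsTree) (hni : noInv G g) (hl : 0 < ell G g)
    {p : V} (hp : p ∈ axisSet G g) (q : V) :
    p ∈ seg G q (g p) ∨ p ∈ seg G q (g⁻¹ p) := by
  have hc := hT.isConnected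
  by_contra hcon
  push_neg at hcon
  obtain ⟨h1, h2⟩ := hcon
  have hqp : q ≠ p := by
    rintro rfl
    exact h1 (by simp [seg])
  obtain ⟨m, hm1, hm2, hm3⟩ := median hT p q (g p)
  obtain ⟨m', hm1', hm2', hm3'⟩ := median hT p q (g⁻¹ p)
  have hs1 : 1 ≤ G.dist p m := by
    rcases Nat.eq_zero_or_pos (G.dist p m) with h0 | h0
    · exfalso
      obtain rfl : p = m := (hc.dist_eq_zero_iff).mp h0
      exact h1 hm3
    · omega
  have hs1' : 1 ≤ G.dist p m' := by
    rcases Nat.eq_zero_or_pos (G.dist p m') with h0 | h0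
    · exfalso
      obtain rfl : p = m' := (hc.dist_eq_zero_iff).mp h0
      exact h2 hm3'
    · omega
  obtain ⟨w, hw⟩ := hc.exists_walk_length_eq_dist p q
  obtain ⟨i, hil, hgi, hdi⟩ := seg_index hT hm1 hw
  obtain ⟨j, hjl, hgj, hdj⟩ := seg_index hT hm1' hw
  set u := w.getVert 1 with hu
  have hpq1 : 1 ≤ w.length := by
    rw [hw]
    exact hc.pos_dist_of_ne (fun h => hqp h.symm)
  have hpu : G.dist p u = 1 := by
    have := geo_getVert_dist hc hw (show (0:ℕ) ≤ 1 by omega) hpq1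
    rw [w.getVert_zero, ← hu] at this
    omega
  have hum : G.dist u m = G.dist p m - 1 := by
    have := geo_getVert_dist hc hw (show 1 ≤ i by omega) hil
    rw [hgi, ← hu] at this
    omega
  have hum' : G.dist u m' = G.dist p m' - 1 := by
    have := geo_getVert_dist hc hw (show 1 ≤ j by omega) hjl
    rw [hgj, ← hu] at this
    omega
  have husegm : u ∈ seg G p m := by
    simp only [seg, Set.mem_setOf_eq]
    omega
  have husegm' : u ∈ seg G p m' := by
    simp only [seg, Set.mem_setOf_eq]
    omega
  have hu1 : u ∈ seg G p (g p) := (seg_trans hc hm2 husegm).1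
  have hu2 : u ∈ seg G p (g⁻¹ p) := (seg_trans hc hm2' husegm').1
  simp only [seg, Set.mem_setOf_eq] at hu1 hu2
  have hL1 : G.dist p (g p) = ell G g := hp
  have hL2 : G.dist p (g⁻¹ p) = ell G g := by rw [dist_inv hc]; exact hp
  have htwo : G.dist (g⁻¹ p) (g p) = 2 * ell G g := by
    have := dist_pres hc g (g⁻¹ p) (g p)
    rw [inv_apply_self] at this
    rw [← this]
    exact dist_two hT hni hl hp
  have htri : G.dist (g⁻¹ p) (g p) ≤ G.dist (g⁻¹ p) u + G.dist u (g p) := hc.dist_triangle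
  have hcomm : G.dist (g⁻¹ p) u = G.dist u (g⁻¹ p) := SimpleGraph.dist_comm ..
  omega

lemma lemA (hT : G.IsTree) (hni : noInv G g) (hl : 0 < ell G g)
    {p q : V} (hp : p ∈ axisSet G g) (hq : q ∈ axisSet G g)
    (hpq : p ∈ seg G q (g⁻¹ p)) :
    q ∈ seg G p (g p) ∨
      ((g p) ∈ seg G p q ∧ G.dist (g p) q + ell G g = G.dist p q) := by
  have hc := hT.isConnected
  set L := ell G g with hL
  obtain ⟨m, hm1, hm2, hm3⟩ := median hT p q (g p)
  have hm_ax : m ∈ axisSet G g := seg_axis_subset hc hp hm2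
  have hLp : G.dist p (g p) = L := hp
  have hLq : G.dist q (g q) = L := hq
  have hLm : G.dist m (g m) = L := hm_ax
  have E1 : G.dist p m + G.dist m q = G.dist p q := hm1
  have E2 : G.dist p m + G.dist m (g p) = L := by
    have := hm2; simp only [seg, Set.mem_setOf_eq] at this; rwa [hLp] at this
  have E3 : G.dist q m + G.dist m (g p) = G.dist q (g p) := hm3
  by_cases hmgp : m = g p
  · right
    subst hmgp
    refine ⟨hm1, ?_⟩
    have hcm : G.dist (g p) q = G.dist q (g p) := SimpleGraph.dist_comm ..
    omega
  · left
    have hdmgp : 1 ≤ G.dist m (g p) := hc.pos_dist_of_ne hmgp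
    have hgpgm : G.dist (g p) (g m) = G.dist p m := dist_pres hc g ..
    -- α : d q (g m) = d m q + L
    have hA : G.dist q (g m) = G.dist m q + L := by
      have hseg2 : g p ∈ seg G m (g m) := by
        simp only [seg, Set.mem_setOf_eq]
        omega
      have := concat hT hm3 hseg2 hmgp
      have hcm : G.dist q m = G.dist m q := SimpleGraph.dist_comm ..
      omega
    -- β : d q (g⁻¹ m) = d m q + L
    have hB : G.dist q (g⁻¹ m) = G.dist m q + L := by
      by_cases hs0 : G.dist p m = 0
      · obtain rfl : p = m := (hc.dist_eq_zero_iff).mp hs0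
        have := hpq; simp only [seg, Set.mem_setOf_eq] at this
        have hLp' : G.dist p (g⁻¹ p) = L := by rw [dist_inv hc]; exact hp
        have hcm : G.dist q p = G.dist p q := SimpleGraph.dist_comm ..
        omega
      · have hmp : m ≠ p := by
          intro hh; subst hh; simp at hs0
        have hsegqp : m ∈ seg G q p := by
          simp only [seg, Set.mem_setOf_eq]
          have c1 : G.dist q m = G.dist m q := SimpleGraph.dist_comm ..
          have c2 : G.dist m p = G.dist p m := SimpleGraph.dist_comm ..
          have c3 : G.dist q p = G.dist p q := SimpleGraph.dist_comm ..
          omega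
        have hpginvm : G.dist p (g⁻¹ m) = G.dist m (g p) := by
          have := dist_pres hc g p (g⁻¹ m)
          rw [inv_apply_self] at this
          rw [← this]
          exact (SimpleGraph.dist_comm ..)
        have hminvm : G.dist m (g⁻¹ m) = L := by rw [dist_inv hc]; exact hLm
        have hsegp : p ∈ seg G m (g⁻¹ m) := by
          simp only [seg, Set.mem_setOf_eq]
          have c2 : G.dist m p = G.dist p m := SimpleGraph.dist_comm ..
          omega
        have := concat hT hsegqp hsegp hmp
        have c1 : G.dist q m = G.dist m q := SimpleGraph.dist_comm ..
        have c2 : G.dist m p = G.dist p m := SimpleGraph.dist_comm ..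
        omega
    -- γ : d m (g q) = d m q + L
    have hC : G.dist m (g q) = G.dist m q + L := by
      have h' := dist_pres hc g q (g⁻¹ m)
      rw [inv_apply_self] at h'
      -- h' : G.dist (g q) m = G.dist q (g⁻¹ m)
      have hcm : G.dist m (g q) = G.dist (g q) m := SimpleGraph.dist_comm ..
      omega
    -- final
    have hgmgq : G.dist (g m) (g q) = G.dist m q := dist_pres hc g ..
    have hmgm_ne : m ≠ g m := by
      intro hh
      have : G.dist m (g m) = 0 := by rw [← hh]; simp
      omega
    have hf1 : m ∈ seg G q (g m) := by
      simp only [seg, Set.mem_setOf_eq]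
      have hcm : G.dist q m = G.dist m q := SimpleGraph.dist_comm ..
      omega
    have hf2 : g m ∈ seg G m (g q) := by
      simp only [seg, Set.mem_setOf_eq]
      omega
    have hfin := concat hT hf1 hf2 hmgm_ne
    have hqgq : G.dist q (g q) = L := hq
    have he0 : G.dist m q = 0 := by
      have hcm : G.dist q m = G.dist m q := SimpleGraph.dist_comm ..
      omega
    obtain rfl : m = q := (hc.dist_eq_zero_iff).mp he0
    exact hm2

lemma conv_step (hT : G.IsTree) (hni : noInv G g) (hl : 0 < ell G g)
    {p q : V} (hp : p ∈ axisSet G g) (hq : q ∈ axisSet G g)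
    (hpq : p ∈ seg G q (g⁻¹ p)) {y : V} (hy : y ∈ seg G p q) :
    y ∈ axisSet G g ∨
      (g p ∈ axisSet G g ∧ y ∈ seg G (g p) q ∧ G.dist (g p) q + ell G g = G.dist p q) := by
  have hc := hT.isConnected
  set L := ell G g with hL
  rcases lemA hT hni hl hp hq hpq with hq' | ⟨hgp, heq⟩
  · left
    exact seg_axis_subset hc hp (seg_trans hc hq' hy).1
  · have hLp : G.dist p (g p) = L := hp
    have habs := seg_dist_int hT hy hgp
    have hy' : G.dist p y + G.dist y q = G.dist p q := hy
    by_cases ht : G.dist p y ≤ L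
    · left
      have hmem : y ∈ seg G p (g p) := by
        simp only [seg, Set.mem_setOf_eq]
        rcases abs_cases ((G.dist p y : ℤ) - (G.dist p (g p) : ℤ)) with ⟨h', _⟩ | ⟨h', _⟩ <;>
          omega
      exact seg_axis_subset hc hp hmem
    · right
      refine ⟨axis_apply hc hp, ?_, heq⟩
      simp only [seg, Set.mem_setOf_eq]
      have hcm : G.dist (g p) y = G.dist y (g p) := SimpleGraph.dist_comm ..
      rcases abs_cases ((G.dist p y : ℤ) - (G.dist p (g p) : ℤ)) with ⟨h', _⟩ | ⟨h', _⟩ <;>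
        omega

lemma conv (hT : G.IsTree) (hni : noInv G g) (hl : 0 < ell G g) :
    ∀ (D : ℕ) (p q : V), p ∈ axisSet G g → q ∈ axisSet G g → G.dist p q = D →
      seg G p q ⊆ axisSet G g := by
  have hc := hT.isConnected
  intro D
  induction D using Nat.strong_induction_on with
  | _ D IH =>
    intro p q hp hq hD y hy
    rcases lemB hT hni hl hp q with hB | hB
    · -- p ∈ seg q (g p) : work with g⁻¹
      have hni' : noInv G g⁻¹ := noInv_inv hni
      have hl' : 0 < ell G g⁻¹ := by rw [ell_inv]; exact hl
      have hp' : p ∈ axisSet G g⁻¹ := by rw [axisSet_inv hc]; exact hp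
      have hq' : q ∈ axisSet G g⁻¹ := by rw [axisSet_inv hc]; exact hq
      have hpq' : p ∈ seg G q ((g⁻¹)⁻¹ p) := by rw [inv_inv]; exact hB
      rcases conv_step hT hni' hl' hp' hq' hpq' hy with hax | ⟨hgp, hy2, heq⟩
      · rwa [axisSet_inv hc] at hax
      · rw [axisSet_inv hc] at hgp
        rw [ell_inv] at heq
        have hlt : G.dist (g⁻¹ p) q < D := by omega
        exact IH _ hlt (g⁻¹ p) q hgp hq rfl hy2
    · rcases conv_step hT hni hl hp hq hB hy with hax | ⟨hgp, hy2, heq⟩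
      · exact hax
      · have hlt : G.dist (g p) q < D := by omega
        exact IH _ hlt (g p) q hgp hq rfl hy2

lemma axis_convex (hT : G.IsTree) (hni : noInv G g) (hl : 0 < ell G g)
    {p q : V} (hp : p ∈ axisSet G g) (hq : q ∈ axisSet G g) :
    seg G p q ⊆ axisSet G g :=
  conv hT hni hl (G.dist p q) p q hp hq rfl

lemma pow_apply_succ (g : G ≃g G) (k : ℕ) (x : V) : (g ^ (k+1)) x = g ((g ^ k) x) := by
  rw [pow_succ']
  rfl

lemma pow_apply_two (g : G ≃g G) (k : ℕ) (x : V) :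
    (g ^ (k+2)) x = g (g ((g ^ k) x)) := by
  rw [pow_apply_succ, pow_apply_succ]

lemma axis_pow (hc : G.Connected) {x : V} (hx : x ∈ axisSet G g) (k : ℕ) :
    (g ^ k) x ∈ axisSet G g := by
  induction k with
  | zero => simpa using hx
  | succ k ih => rw [pow_apply_succ]; exact axis_apply hc ih

lemma dist_pow (hT : G.IsTree) (hni : noInv G g) (hl : 0 < ell G g)
    {x : V} (hx : x ∈ axisSet G g) :
    ∀ k : ℕ, G.dist x ((g ^ k) x) = k * ell G g := by
  have hc := hT.isConnected
  set L := ell G g with hL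
  have key : ∀ k : ℕ, G.dist x ((g ^ k) x) = k * L ∧
      G.dist x ((g ^ (k+1)) x) = (k+1) * L := by
    intro k
    induction k with
    | zero =>
      constructor
      · simp
      · rw [pow_apply_succ]
        simpa using (show G.dist x (g x) = L from hx)
    | succ k ih =>
      obtain ⟨ih1, ih2⟩ := ih
      refine ⟨ih2, ?_⟩
      set b := (g ^ k) x with hb
      have e1 : (g ^ (k+1)) x = g b := by rw [pow_apply_succ, hb]
      have e2 : (g ^ (k+2)) x = g (g b) := by rw [pow_apply_two, hb]
      have hbax : b ∈ axisSet G g := axis_pow hc hx k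
      have hdb : G.dist b (g b) = L := hbax
      have h2L : G.dist b (g (g b)) = 2 * L := dist_two hT hni hl hbax
      have hgb : G.dist (g b) (g (g b)) = L := axis_apply hc hbax
      rw [e1] at ih2
      have hr1 : (k+1) * L = k * L + L := by ring
      have hr2 : (k+2) * L = k * L + L + L := by ring
      have hseg1 : b ∈ seg G x (g b) := by
        simp only [seg, Set.mem_setOf_eq]; omega
      have hseg2 : g b ∈ seg G b (g (g b)) := by
        simp only [seg, Set.mem_setOf_eq]; omega
      have hbne : b ≠ g b := by
        intro hh
        have : G.dist b (g b) = 0 := by rw [← hh]; simp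
        omega
      have hcc := concat hT hseg1 hseg2 hbne
      show G.dist x ((g ^ (k+2)) x) = (k+2) * L
      rw [e2]
      omega
  intro k
  exact (key k).1

lemma zpow_apply_eq_pow (g : G ≃g G) (n : ℕ) (x : V) : (g ^ (n:ℤ)) x = (g ^ n) x := by
  rw [zpow_natCast]

lemma dist_zpow (hT : G.IsTree) (hni : noInv G g) (hl : 0 < ell G g)
    {x : V} (hx : x ∈ axisSet G g) (k : ℤ) :
    (G.dist x ((g ^ k) x) : ℤ) = |k| * ell G g := by
  have hc := hT.isConnected
  rcases le_or_gt 0 k with hk | hk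
  · obtain ⟨n, rfl⟩ := Int.eq_ofNat_of_zero_le hk
    rw [zpow_apply_eq_pow, dist_pow hT hni hl hx n, Nat.abs_cast]
    push_cast
    ring
  · obtain ⟨n, rfl⟩ : ∃ n : ℕ, k = -(n:ℤ) := ⟨k.natAbs, by omega⟩
    have h1 : (g ^ (-(n:ℤ))) x = ((g ^ n)⁻¹) x := by
      rw [zpow_neg, zpow_natCast]
    rw [h1]
    have h2 : G.dist x ((g ^ n)⁻¹ x) = G.dist ((g ^ n) x) x := by
      have := dist_pres hc (g ^ n) x ((g ^ n)⁻¹ x)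
      rw [inv_apply_self] at this
      rw [← this]
    rw [h2, SimpleGraph.dist_comm, dist_pow hT hni hl hx n]
    rw [abs_neg, Nat.abs_cast]
    push_cast
    ring

lemma axis_zpow (hc : G.Connected) {x : V} (hx : x ∈ axisSet G g) (k : ℤ) :
    (g ^ k) x ∈ axisSet G g := by
  show G.dist ((g^k) x) (g ((g^k) x)) = ell G g
  have hcomm : g ((g^k) x) = (g^k) (g x) := by
    have : g * g ^ k = g ^ k * g := ((Commute.refl g).zpow_right k).eq
    show (g * g ^ k) x = _
    rw [this]
    rfl
  rw [hcomm, dist_pres hc (g^k)]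
  exact hx

/-- `c` is the gate of `x` into `A`. -/
def IsGate (G : SimpleGraph V) (A : Set V) (x c : V) : Prop :=
  c ∈ A ∧ ∀ p ∈ A, G.dist x p = G.dist x c + G.dist c p

lemma gate_unique (hc : G.Connected) {A : Set V} {x c c' : V}
    (h1 : IsGate G A x c) (h2 : IsGate G A x c') : c = c' := by
  obtain ⟨hcA, hcp⟩ := h1
  obtain ⟨hcA', hcp'⟩ := h2
  have e1 := hcp c' hcA'
  have e2 := hcp' c hcA
  have hcm : G.dist c c' = G.dist c' c := SimpleGraph.dist_comm ..
  have : G.dist c c' = 0 := by omega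
  exact (hc.dist_eq_zero_iff).mp this

lemma gate_self {A : Set V} {x : V} (hx : x ∈ A) : IsGate G A x x :=
  ⟨hx, fun p _ => by simp⟩

lemma gate_exists (hT : G.IsTree) {A : Set V}
    (hconv : ∀ p ∈ A, ∀ q ∈ A, seg G p q ⊆ A) (hA : A.Nonempty) (x : V) :
    ∃ c, IsGate G A x c := by
  have hc := hT.isConnected
  have hne : (G.dist x '' A).Nonempty := hA.image _
  obtain ⟨c, hcA, hck⟩ := Nat.sInf_mem hne
  refine ⟨c, hcA, ?_⟩
  intro p hpA
  obtain ⟨m, hm1, hm2, hm3⟩ := median hT x c p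
  have hmA : m ∈ A := hconv c hcA p hpA hm3
  have hmin : sInf (G.dist x '' A) ≤ G.dist x m := Nat.sInf_le ⟨m, hmA, rfl⟩
  have e1 : G.dist x m + G.dist m c = G.dist x c := hm1
  have e2 : G.dist x m + G.dist m p = G.dist x p := hm2
  have hmc : G.dist m c = 0 := by omega
  obtain rfl : m = c := (hc.dist_eq_zero_iff).mp hmc
  omega

lemma gate_mem_projOn (hT : G.IsTree) {A B : Set V}
    (hAconv : ∀ p ∈ A, ∀ q ∈ A, seg G p q ⊆ A)
    (hBconv : ∀ p ∈ B, ∀ q ∈ B, seg G p q ⊆ B)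
    (hA : A.Nonempty) (hB : B.Nonempty)
    {y c : V} (hy : y ∈ B) (hg : IsGate G A y c) : c ∈ projOn G A B := by
  have hc := hT.isConnected
  obtain ⟨hcA, hgate⟩ := hg
  have hne2 : (Set.image2 G.dist A B).Nonempty := by
    obtain ⟨p0, hp0⟩ := hA
    obtain ⟨q0, hq0⟩ := hB
    exact ⟨G.dist p0 q0, Set.mem_image2_of_mem hp0 hq0⟩
  have hδmem := Nat.sInf_mem hne2
  rw [Set.mem_image2] at hδmem
  obtain ⟨p0, hp0, q0, hq0, hd0⟩ := hδmem
  set δ := setDist G A B with hδ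
  have hd0' : G.dist p0 q0 = δ := hd0
  -- p := gate of q0 into A
  obtain ⟨p, hpA, hpgate⟩ := gate_exists hT hAconv hA q0
  have hq0p : G.dist q0 p = δ := by
    have h1 := hpgate p0 hp0
    have hle : δ ≤ G.dist p q0 := Nat.sInf_le (Set.mem_image2_of_mem hpA hq0)
    have hcm : G.dist p q0 = G.dist q0 p := SimpleGraph.dist_comm ..
    have hcm2 : G.dist q0 p0 = G.dist p0 q0 := SimpleGraph.dist_comm ..
    omega
  refine ⟨hcA, ?_⟩
  have hge : δ ≤ distToSet G c B := by
    apply le_csInf (hB.image _)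
    rintro k ⟨q, hqB, rfl⟩
    exact Nat.sInf_le (Set.mem_image2_of_mem hcA hqB)
  have hle : distToSet G c B ≤ δ := by
    obtain ⟨m, hm1, hm2, hm3⟩ := median hT c q0 y
    have hmB : m ∈ B := hBconv q0 hq0 y hy hm3
    have hle1 : distToSet G c B ≤ G.dist c m := Nat.sInf_le ⟨m, hmB, rfl⟩
    -- bound d c m ≤ δ
    have e1 : G.dist c m + G.dist m q0 = G.dist c q0 := hm1
    have e2 : G.dist c m + G.dist m y = G.dist c y := hm2
    have e3 : G.dist q0 m + G.dist m y = G.dist q0 y := hm3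
    have f1 : G.dist q0 c = δ + G.dist p c := by
      have := hpgate c hcA
      omega
    have f2 : G.dist y p = G.dist y c + G.dist c p := hgate p hpA
    have f3 : G.dist y p ≤ G.dist y q0 + G.dist q0 p := hc.dist_triangle
    have c1 : G.dist c q0 = G.dist q0 c := SimpleGraph.dist_comm ..
    have c2 : G.dist c y = G.dist y c := SimpleGraph.dist_comm ..
    have c3 : G.dist p c = G.dist c p := SimpleGraph.dist_comm ..
    have c4 : G.dist q0 y = G.dist y q0 := SimpleGraph.dist_comm ..
    have c5 : G.dist q0 m = G.dist m q0 := SimpleGraph.dist_comm ..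
    omega
  omega

lemma gate_dichotomy (hT : G.IsTree) {A B P Q : Set V}
    (hAconv : ∀ p ∈ A, ∀ q ∈ A, seg G p q ⊆ A)
    (hBconv : ∀ p ∈ B, ∀ q ∈ B, seg G p q ⊆ B)
    (hA : A.Nonempty) (hB : B.Nonempty)
    (hPA : projOn G A B ⊆ P) (hQB : projOn G B A ⊆ Q)
    {x cA cB : V} (hgA : IsGate G A x cA) (hgB : IsGate G B x cB)
    (hcA : cA ∉ P) : cB ∈ Q := by
  have hc := hT.isConnected
  -- w : gate of cB into A, lies in P
  obtain ⟨w, hwgate⟩ := gate_exists hT hAconv hA cB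
  have hwP : w ∈ P := hPA (gate_mem_projOn hT hAconv hBconv hA hB hgB.1 hwgate)
  have hwne : cA ≠ w := by rintro rfl; exact hcA hwP
  -- w' : gate of cA into B, lies in Q
  obtain ⟨w', hw'gate⟩ := gate_exists hT hBconv hB cA
  have hw'Q : w' ∈ Q := hQB (gate_mem_projOn hT hBconv hAconv hB hA hgA.1 hw'gate)
  -- concat x, cA, w, cB
  have h1 : cA ∈ seg G x w := by
    simp only [seg, Set.mem_setOf_eq]
    exact (hgA.2 w hwgate.1).symm
  have h2 : w ∈ seg G cA cB := by
    simp only [seg, Set.mem_setOf_eq]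
    have := hwgate.2 cA hgA.1
    have c1 : G.dist cB w = G.dist w cB := SimpleGraph.dist_comm ..
    have c2 : G.dist cB cA = G.dist cA cB := SimpleGraph.dist_comm ..
    have c3 : G.dist w cA = G.dist cA w := SimpleGraph.dist_comm ..
    omega
  have hxcb := concat hT h1 h2 hwne
  have hsum : G.dist cA cB = G.dist cA w + G.dist w cB := by
    have := h2
    simp only [seg, Set.mem_setOf_eq] at this
    omega
  -- gate equations
  have g1 : G.dist x w' = G.dist x cB + G.dist cB w' := hgB.2 w' hw'gate.1
  have g2 : G.dist x w' ≤ G.dist x cA + G.dist cA w' := hc.dist_triangle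
  have g3 : G.dist cA cB = G.dist cA w' + G.dist w' cB := hw'gate.2 cB hgB.1
  have c1 : G.dist w' cB = G.dist cB w' := SimpleGraph.dist_comm ..
  have hzero : G.dist cB w' = 0 := by omega
  obtain rfl : cB = w' := (hc.dist_eq_zero_iff).mp hzero
  exact hw'Q

variable {g : G ≃g G}

lemma gate_zpow (hc : G.Connected) {x c : V} (k : ℤ)
    (hg : IsGate G (axisSet G g) x c) :
    IsGate G (axisSet G g) ((g ^ k) x) ((g ^ k) c) := by
  obtain ⟨hcA, hgate⟩ := hg
  refine ⟨axis_zpow hc hcA k, ?_⟩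
  intro p hpA
  have hp' : ((g ^ k)⁻¹) p ∈ axisSet G g := by
    have : (g ^ k)⁻¹ = g ^ (-k) := by rw [zpow_neg]
    rw [this]
    exact axis_zpow hc hpA (-k)
  have e0 : (g ^ k) ((g ^ k)⁻¹ p) = p := inv_apply_self (g ^ k) p
  have e1 : G.dist ((g ^ k) x) p = G.dist x ((g ^ k)⁻¹ p) := by
    rw [← e0, dist_pres hc (g ^ k), e0]
  have e2 : G.dist ((g ^ k) c) p = G.dist c ((g ^ k)⁻¹ p) := by
    rw [← e0, dist_pres hc (g ^ k), e0]
  have e3 : G.dist ((g ^ k) x) ((g ^ k) c) = G.dist x c := dist_pres hc (g ^ k) ..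
  rw [e1, e2, e3]
  exact hgate _ hp'

lemma pow_moves_off (hT : G.IsTree) (hni : noInv G g) (hl : 0 < ell G g)
    {a b c : V} (hab : G.dist a b = ell G g)
    (hcax : c ∈ axisSet G g) (hcP : c ∈ openSeg G a b) {k : ℤ} (hk : k ≠ 0) :
    (g ^ k) c ∉ openSeg G a b := by
  have hc := hT.isConnected
  rintro ⟨hmem, _, _⟩
  obtain ⟨hcseg, hca, hcb⟩ := hcP
  set L := ell G g with hL
  set c' := (g ^ k) c with hc'
  have hdcc' : (G.dist c c' : ℤ) = |k| * L := dist_zpow hT hni hl hcax k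
  -- T2 : both on seg a b means distance ≤ L
  have t1 : G.dist c c' ≤ G.dist c a + G.dist a c' := hc.dist_triangle
  have t2 : G.dist c c' ≤ G.dist c b + G.dist b c' := hc.dist_triangle
  have s1 : G.dist a c + G.dist c b = L := by rw [← hab]; exact hcseg
  have s2 : G.dist a c' + G.dist c' b = L := by rw [← hab]; exact hmem
  have c1 : G.dist c a = G.dist a c := SimpleGraph.dist_comm ..
  have c2 : G.dist b c' = G.dist c' b := SimpleGraph.dist_comm ..
  have hle : G.dist c c' ≤ L := by omega
  have hk1 : 1 ≤ |k| := Int.one_le_abs (by exact_mod_cast hk)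
  have hLpos : (0:ℤ) < L := by exact_mod_cast hl
  have habs1 : (G.dist c c' : ℤ) = L := by nlinarith
  -- positions
  have hposc : 1 ≤ G.dist a c := hc.pos_dist_of_ne (fun h => hca h.symm)
  have hposcb : 1 ≤ G.dist c b := hc.pos_dist_of_ne hcb
  have habs2 := seg_dist_int hT hcseg hmem
  rcases abs_cases ((G.dist a c : ℤ) - (G.dist a c' : ℤ)) with ⟨h', _⟩ | ⟨h', _⟩ <;>
    omega

noncomputable def toPermHom (G : SimpleGraph V) : (G ≃g G) →* Equiv.Perm V where
  toFun f := f.toEquiv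
  map_one' := rfl
  map_mul' f h := rfl

lemma toPermHom_apply (f : G ≃g G) (x : V) : (toPermHom G f) x = f x := rfl

lemma case_zero (g : Fin 0 → (G ≃g G)) :
    Function.Injective (FreeGroup.lift g : FreeGroup (Fin 0) →* (G ≃g G)) := by
  have hall : ∀ w : FreeGroup (Fin 0), w = 1 := by
    intro w
    induction w using FreeGroup.induction_on with
    | C1 => rfl
    | of i => exact i.elim0
    | inv_of i ih => exact i.elim0
    | mul u v hu hv => rw [hu, hv, mul_one]
  intro u v _
  rw [hall u, hall v]

lemma pingpong {n : ℕ} (hn : 2 ≤ n) (a' : Fin n → Equiv.Perm V)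
    (X : Fin n → Set V)
    (hXne : ∀ i, (X i).Nonempty)
    (hXdisj : Pairwise (Function.onFun Disjoint X))
    (hmove : ∀ i j, i ≠ j → ∀ (k : ℤ), k ≠ 0 → ∀ x ∈ X j, (a' i ^ k) x ∈ X i) :
    Function.Injective (FreeGroup.lift a' : FreeGroup (Fin n) →* Equiv.Perm V) := by
  have heq : (FreeGroup.lift a' : FreeGroup (Fin n) →* Equiv.Perm V) =
      (Monoid.CoprodI.lift fun i : Fin n => FreeGroup.lift fun _ : Unit => a' i).comp
        (@freeGroupEquivCoprodI (Fin n)).toMonoidHom := by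
    ext i
    simp
  haveI : Nontrivial (Fin n) := ⟨⟨0, by omega⟩, ⟨1, by omega⟩, by simp [Fin.ext_iff]⟩
  rw [heq, MonoidHom.coe_comp]
  refine Function.Injective.comp ?_ (MulEquiv.injective _)
  have hcard : 3 ≤ Cardinal.mk (Fin n) ∨ ∃ i : Fin n, 3 ≤ Cardinal.mk (FreeGroup Unit) := by
    right
    exact ⟨⟨0, by omega⟩, by
      rw [FreeGroup.freeGroupUnitEquivInt.cardinal_eq, Cardinal.mk_denumerable]
      exact (Cardinal.nat_lt_aleph0 3).le⟩
  apply Monoid.CoprodI.lift_injective_of_ping_pong _ hcard X hXne hXdisj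
  intro i j hij
  refine FreeGroup.freeGroupUnitEquivInt.forall_congr_left.mpr ?_
  intro k hne1
  change FreeGroup.lift (fun _ => a' i) (FreeGroup.of () ^ k) • X j ⊆ X i
  simp only [map_zpow, FreeGroup.lift_apply_of]
  have hk0 : k ≠ 0 := by
    rintro rfl
    apply hne1
    simp [FreeGroup.freeGroupUnitEquivInt]
  rintro x ⟨y, hy, rfl⟩
  show (a' i ^ k) y ∈ X i
  exact hmove i j hij k hk0 y hy

lemma freegroup_one_zpow (w : FreeGroup (Fin 1)) : ∃ k : ℤ, w = (FreeGroup.of 0)^k := by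
  induction w using FreeGroup.induction_on with
  | C1 => exact ⟨0, by simp⟩
  | of i =>
    refine ⟨1, ?_⟩
    have h0 : i = 0 := Subsingleton.elim _ _
    rw [h0, zpow_one]
  | inv_of i ih =>
    obtain ⟨k, hk⟩ := ih
    exact ⟨-k, by rw [hk, zpow_neg]⟩
  | mul u v hu hv =>
    obtain ⟨k, hk⟩ := hu
    obtain ⟨l, hl⟩ := hv
    exact ⟨k + l, by rw [hk, hl, zpow_add]⟩

end PP

/-- The Ping Pong Lemma for trees: if each axis carries an open segment of length equal
to the translation length containing all the projections of the other axes, then the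
isometries generate a free group of rank n (the lift from the free group is injective). -/
theorem stmt11 (G : SimpleGraph V) (hT : G.IsTree) (n : ℕ) (g : Fin n → (G ≃g G))
    (hni : ∀ i, noInv G (g i))
    (hyp : ∀ i, 0 < ell G (g i))
    (hP : ∀ i : Fin n, ∃ a b : V, a ∈ axisSet G (g i) ∧ b ∈ axisSet G (g i) ∧
      G.dist a b = ell G (g i) ∧
      ∀ j : Fin n, j ≠ i →
        projOn G (axisSet G (g i)) (axisSet G (g j)) ⊆ openSeg G a b) :
    Function.Injective (FreeGroup.lift g : FreeGroup (Fin n) →* (G ≃g G)) := by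
  classical
  have hc := hT.isConnected
  rcases Nat.lt_or_ge n 1 with h0 | h1
  · obtain rfl : n = 0 := by omega
    exact PP.case_zero g
  rcases Nat.lt_or_ge n 2 with h1' | h2
  · -- one generator : infinite order
    obtain rfl : n = 1 := by omega
    refine (injective_iff_map_eq_one _).mpr ?_
    intro w hw
    obtain ⟨k, rfl⟩ := PP.freegroup_one_zpow w
    rw [map_zpow, FreeGroup.lift_apply_of] at hw
    obtain ⟨a, b, ha, hb, hab, _⟩ := hP 0
    have hd := PP.dist_zpow hT (hni 0) (hyp 0) ha k
    have happ : ((g 0)^k) a = a := by rw [hw]; rfl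
    rw [happ] at hd
    rw [SimpleGraph.dist_self] at hd
    have hL : (0:ℤ) < (ell G (g 0) : ℤ) := by exact_mod_cast hyp 0
    have hk : k = 0 := by
      rcases mul_eq_zero.mp hd.symm with h' | h'
      · exact abs_eq_zero.mp h'
      · omega
    rw [hk, zpow_zero]
  · -- main case : ping pong
    choose a b ha hb hab hproj using hP
    have hconv : ∀ i, ∀ p ∈ axisSet G (g i), ∀ q ∈ axisSet G (g i),
        seg G p q ⊆ axisSet G (g i) :=
      fun i p hp q hq => PP.axis_convex hT (hni i) (hyp i) hp hq
    have hAne : ∀ i, (axisSet G (g i)).Nonempty := fun i => ⟨a i, ha i⟩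
    set X : Fin n → Set V :=
      fun i => {x | ∀ c, PP.IsGate G (axisSet G (g i)) x c → c ∉ openSeg G (a i) (b i)}
      with hX
    have key : ∀ i j, i ≠ j → ∀ x ∈ X j, ∀ c, PP.IsGate G (axisSet G (g i)) x c →
        c ∈ openSeg G (a i) (b i) := by
      intro i j hij x hx c hgc
      obtain ⟨cj, hgj⟩ := PP.gate_exists hT (hconv j) (hAne j) x
      exact PP.gate_dichotomy hT (hconv j) (hconv i) (hAne j) (hAne i)
        (hproj j i hij) (hproj i j hij.symm) hgj hgc (hx cj hgj)
    have hXne : ∀ i, (X i).Nonempty := by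
      intro i
      refine ⟨a i, ?_⟩
      intro c hgc hmem
      have hca : c = a i := PP.gate_unique hc hgc (PP.gate_self (ha i))
      exact hmem.2.1 hca
    have hXdisj : Pairwise (Function.onFun Disjoint X) := by
      intro i j hij
      rw [Function.onFun, Set.disjoint_left]
      intro x hxi hxj
      obtain ⟨ci, hgi⟩ := PP.gate_exists hT (hconv i) (hAne i) x
      exact (hxi ci hgi) (key i j hij x hxj ci hgi)
    set a' : Fin n → Equiv.Perm V := fun i => PP.toPermHom G (g i) with ha'
    have hmove : ∀ i j, i ≠ j → ∀ (k : ℤ), k ≠ 0 → ∀ x ∈ X j, (a' i ^ k) x ∈ X i := by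
      intro i j hij k hk x hx
      have happ : ∀ z : V, (a' i ^ k) z = ((g i)^k) z := by
        intro z
        rw [ha']
        simp only
        rw [← map_zpow]
        rfl
      rw [happ x]
      intro c hgc
      obtain ⟨c0, hg0⟩ := PP.gate_exists hT (hconv i) (hAne i) x
      have hc0P : c0 ∈ openSeg G (a i) (b i) := key i j hij x hx c0 hg0
      have hgz := PP.gate_zpow hc (g := g i) k hg0
      have hcc : c = ((g i)^k) c0 := PP.gate_unique hc hgc hgz
      rw [hcc]
      exact PP.pow_moves_off hT (hni i) (hyp i) (hab i) hg0.1 hc0P hk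
    have hinj : Function.Injective (FreeGroup.lift a' : FreeGroup (Fin n) →* Equiv.Perm V) :=
      PP.pingpong h2 a' X hXne hXdisj hmove
    have hcomp : (PP.toPermHom G).comp (FreeGroup.lift g) = FreeGroup.lift a' := by
      apply FreeGroup.ext_hom
      intro i
      simp [ha', PP.toPermHom]
    intro u v huv
    apply hinj
    have h1 : FreeGroup.lift a' u = (PP.toPermHom G) ((FreeGroup.lift g) u) := by
      rw [← hcomp]; rfl
    have h2' : FreeGroup.lift a' v = (PP.toPermHom G) ((FreeGroup.lift g) v) := by
      rw [← hcomp]; rfl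
    rw [h1, h2', huv]
end
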